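/- arXiv:math/0407265 — 7 statements merged into one kernel-verified Lean document; each statement's English description precedes it below -/
import Mathlib

section
/- For nonnegative integer n and complex parameters a, c with c not a nonpositive integer, the terminating Gauss hypergeometric series satisfies Pfaff's transformation: 2F1(-n, a; c; z) = (1-z)^n · 2F1(-n, c-a; c; z/(z-1)) for all z ≠ 1. -/
open Finset

noncomputable def poch (x : ℂ) (k : ℕ) : ℂ := (ascPochhammer ℂ k).eval x

lemma poch_zero (x : ℂ) : poch x 0 = 1 := by simp [poch]
lemma poch_succ (x : ℂ) (k : ℕ) : poch x (k+1) = poch x k * (x + k) := by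
  simp [poch, ascPochhammer_succ_eval]
lemma poch_succ_left (x : ℂ) (k : ℕ) : poch x (k+1) = x * poch (x+1) k := by
  simp [poch, ascPochhammer_succ_left, Polynomial.eval_mul, Polynomial.eval_comp]

lemma vand (m : ℕ) (x y : ℂ) :
    poch (x + y) m = ∑ k ∈ Finset.range (m + 1),
      (m.choose k : ℂ) * (poch x k * poch y (m - k)) := by
  induction m with
  | zero => simp [poch_zero]
  | succ m ih =>
    rw [poch_succ, ih, Finset.sum_mul]
    have h1 : ∀ k ∈ Finset.range (m+1),
        (m.choose k : ℂ) * (poch x k * poch y (m-k)) * (x + y + m)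
        = (m.choose k : ℂ) * (poch x (k+1) * poch y (m-k))
          + (m.choose k : ℂ) * (poch x k * poch y ((m-k)+1)) := by
      intro k hk
      have hk' : k ≤ m := Nat.lt_succ_iff.mp (Finset.mem_range.mp hk)
      have hxy : (x + y + (m:ℂ)) = (x + k) + (y + ((m-k : ℕ) : ℂ)) := by
        rw [Nat.cast_sub hk']; ring
      rw [poch_succ, poch_succ, hxy]; ring
    rw [Finset.sum_congr rfl h1, Finset.sum_add_distrib]
    have hA : ∑ k ∈ Finset.range (m+1), (m.choose k : ℂ) * (poch x k * poch y ((m-k)+1))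
        = poch y (m+1) + ∑ k ∈ Finset.range (m+1),
            (m.choose (k+1) : ℂ) * (poch x (k+1) * poch y (m-(k+1)+1)) := by
      rw [Finset.sum_range_succ' (fun k => (m.choose k : ℂ) * (poch x k * poch y ((m-k)+1)))]
      rw [Finset.sum_range_succ (fun k => (m.choose (k+1) : ℂ) * (poch x (k+1) * poch y (m-(k+1)+1)))]
      simp [poch_zero, Nat.choose_succ_self, add_comm]
    rw [hA]
    rw [Finset.sum_range_succ' (fun k => ((m+1).choose k : ℂ) * (poch x k * poch y (m+1-k)))]
    have hmatch : ∀ k ∈ Finset.range (m+1),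
        ((m+1).choose (k+1) : ℂ) * (poch x (k+1) * poch y (m+1-(k+1)))
        = (m.choose k : ℂ) * (poch x (k+1) * poch y (m-k))
          + (m.choose (k+1) : ℂ) * (poch x (k+1) * poch y (m-(k+1)+1)) := by
      intro k hk
      have hk' : k ≤ m := Nat.lt_succ_iff.mp (Finset.mem_range.mp hk)
      have h2 : m + 1 - (k+1) = m - k := by omega
      have h3 : (m-(k+1))+1 = m - k ∨ (k = m ∧ (m.choose (k+1) : ℂ) = 0) := by
        rcases Nat.lt_or_ge k m with h | h
        · left; omega
        · right; have : k = m := le_antisymm hk' h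
          simp [this, Nat.choose_succ_self]
      rw [h2, Nat.choose_succ_succ]
      push_cast
      rcases h3 with h3 | ⟨h3, h4⟩
      · rw [h3]; ring
      · rw [h4]; simp [h3]
    rw [Finset.sum_congr rfl hmatch, Finset.sum_add_distrib]
    simp [poch_zero]
    ring

lemma poch_ne_zero {c : ℂ} (hc : ∀ m : ℕ, c ≠ -(m : ℂ)) (k : ℕ) : poch c k ≠ 0 := by
  induction k with
  | zero => simp [poch_zero]
  | succ k ih =>
    rw [poch_succ]
    refine mul_ne_zero ih (fun h => hc k ?_)
    linear_combination h

lemma poch_add (x : ℂ) (i j : ℕ) : poch x (i + j) = poch x i * poch (x + i) j := by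
  induction j with
  | zero => simp [poch_zero]
  | succ j ih =>
    rw [← add_assoc, poch_succ, ih, poch_succ]
    push_cast
    ring

lemma poch_reflect (m : ℕ) (x : ℂ) : poch (1 - m - x) m = (-1)^m * poch x m := by
  induction m generalizing x with
  | zero => simp [poch_zero]
  | succ m ih =>
    have h1 : (1 : ℂ) - (m+1 : ℕ) - x = -(x + m) := by push_cast; ring
    rw [h1, poch_succ_left, show -(x + (m:ℂ)) + 1 = 1 - m - x by ring, ih, poch_succ]
    ring

lemma poch_neg_nat (n k : ℕ) : poch (-(n:ℂ)) k = (-1)^k * (n.descFactorial k : ℂ) := by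
  induction k with
  | zero => simp [poch_zero]
  | succ k ih =>
    rw [poch_succ, ih, Nat.descFactorial_succ]
    rcases le_or_gt k n with h | h
    · push_cast [Nat.cast_sub h]
      ring
    · have h0 : n.descFactorial k = 0 := Nat.descFactorial_eq_zero_iff_lt.mpr h
      simp [h0]

lemma key (m : ℕ) (a c : ℂ) :
    ∑ k ∈ Finset.range (m+1),
      (-1:ℂ)^k * (m.choose k : ℂ) * poch (c-a) k * poch (c + k) (m-k) = poch a m := by
  rw [← Finset.sum_range_reflect]
  simp only [Nat.add_sub_cancel]
  have h1 : ∀ k ∈ Finset.range (m+1),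
      (-1:ℂ)^(m-k) * (m.choose (m-k) : ℂ) * poch (c-a) (m-k) * poch (c + (m-k : ℕ)) (m-(m-k))
      = (-1:ℂ)^m * ((m.choose k : ℂ) * (poch (1 - c - m) k * poch (c-a) (m-k))) := by
    intro k hk
    have hk' : k ≤ m := Nat.lt_succ_iff.mp (Finset.mem_range.mp hk)
    have h2 : m - (m - k) = k := by omega
    have h3 : poch (c + ((m-k : ℕ) : ℂ)) k = (-1:ℂ)^k * poch (1 - c - m) k := by
      have := poch_reflect k (c + ((m-k : ℕ) : ℂ))
      have h4 : (1 : ℂ) - k - (c + ((m-k : ℕ) : ℂ)) = 1 - c - m := by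
        push_cast [Nat.cast_sub hk']; ring
      rw [h4] at this
      rw [this]; rw [← mul_assoc, ← mul_pow]; simp
    have h5 : (m.choose (m-k) : ℂ) = (m.choose k : ℂ) := by
      rw [Nat.choose_symm hk']
    have h6 : (-1:ℂ)^(m-k) * (-1:ℂ)^k = (-1:ℂ)^m := by
      rw [← pow_add, Nat.sub_add_cancel hk']
    rw [h2, h3, h5]
    calc (-1:ℂ)^(m-k) * (m.choose k : ℂ) * poch (c-a) (m-k) * ((-1:ℂ)^k * poch (1 - c - m) k)
        = ((-1:ℂ)^(m-k) * (-1:ℂ)^k) * ((m.choose k : ℂ) * (poch (1 - c - m) k * poch (c-a) (m-k))) := by ring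
      _ = _ := by rw [h6]
  rw [Finset.sum_congr rfl h1, ← Finset.mul_sum, ← vand]
  have h7 : (1 : ℂ) - c - m + (c - a) = 1 - m - a := by ring
  rw [h7, poch_reflect, ← mul_assoc, ← mul_pow]
  simp

lemma chu (m : ℕ) (a c : ℂ) (hc : ∀ m : ℕ, c ≠ -(m : ℂ)) :
    ∑ k ∈ Finset.range (m+1),
      (-1:ℂ)^k * (m.choose k : ℂ) * poch (c-a) k / poch c k = poch a m / poch c m := by
  have hm := poch_ne_zero hc m
  rw [eq_div_iff hm, Finset.sum_mul, ← key m a c]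
  refine Finset.sum_congr rfl fun k hk => ?_
  have hk' : k ≤ m := Nat.lt_succ_iff.mp (Finset.mem_range.mp hk)
  have hdecomp : poch c m = poch c k * poch (c + k) (m - k) := by
    rw [← poch_add, Nat.add_sub_cancel' hk']
  rw [hdecomp]
  have hkne := poch_ne_zero hc k
  field_simp

lemma tri (n : ℕ) (g : ℕ → ℕ → ℂ) :
    ∑ k ∈ Finset.range (n+1), ∑ j ∈ Finset.range (n+1-k), g k j
      = ∑ m ∈ Finset.range (n+1), ∑ k ∈ Finset.range (m+1), g k (m-k) := by
  induction n with
  | zero => simp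
  | succ n ih =>
    rw [Finset.sum_range_succ (fun m => ∑ k ∈ Finset.range (m+1), g k (m-k)), ← ih]
    have h1 : ∀ k ∈ Finset.range (n+2), ∑ j ∈ Finset.range (n+2-k), g k j
        = (∑ j ∈ Finset.range (n+1-k), g k j) + g k (n+1-k) := by
      intro k hk
      have hk' : k ≤ n + 1 := Nat.lt_succ_iff.mp (Finset.mem_range.mp hk)
      have h2 : n + 2 - k = (n+1-k) + 1 := by omega
      rw [h2, Finset.sum_range_succ]
    rw [Finset.sum_congr rfl h1, Finset.sum_add_distrib]
    congr 1
    rw [Finset.sum_range_succ (fun k => ∑ j ∈ Finset.range (n+1-k), g k j)]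
    simp


/-- Terminating Gauss hypergeometric series `2F1(-n, b; c; z)` as a finite sum. -/
noncomputable def hyp (n : ℕ) (b c : ℂ) (z : ℂ) : ℂ :=
  ∑ k ∈ Finset.range (n + 1),
    poch (-(n : ℂ)) k * poch b k / (poch c k * (Nat.factorial k : ℂ)) * z ^ k

theorem pfaff_terminating (n : ℕ) (a c : ℂ) (hc : ∀ m : ℕ, c ≠ -(m : ℂ))
    (z : ℂ) (hz : z ≠ 1) :
    hyp n a c z = (1 - z) ^ n * hyp n (c - a) c (z / (z - 1)) := by
  have h1z : (1 : ℂ) - z ≠ 0 := sub_ne_zero.mpr (Ne.symm hz)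
  unfold hyp
  rw [Finset.mul_sum]
  have hR : ∀ k ∈ Finset.range (n+1),
      (1-z)^n * (poch (-(n:ℂ)) k * poch (c-a) k / (poch c k * (Nat.factorial k : ℂ)) * (z/(z-1))^k)
      = ∑ j ∈ Finset.range (n+1-k),
          (poch (-(n:ℂ)) k * poch (c-a) k / (poch c k * (Nat.factorial k : ℂ)))
            * (((n-k).choose j : ℂ)) * (-1:ℂ)^(k+j) * z^(k+j) := by
    intro k hk
    have hk' : k ≤ n := Nat.lt_succ_iff.mp (Finset.mem_range.mp hk)
    have hA : (1-z)^n * (z/(z-1))^k = (-1:ℂ)^k * z^k * (1-z)^(n-k) := by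
      have hz1 : (z - 1)^k = (-1:ℂ)^k * (1-z)^k := by
        rw [show z - 1 = -(1-z) by ring, neg_pow]
      have hpow : (1-z)^n = (1-z)^k * (1-z)^(n-k) := by
        rw [← pow_add, Nat.add_sub_cancel' hk']
      rw [div_pow, hz1, hpow]
      have hne : ((-1:ℂ)^k * (1-z)^k) ≠ 0 :=
        mul_ne_zero (pow_ne_zero _ (by norm_num)) (pow_ne_zero _ h1z)
      have hsq : (-1:ℂ)^k * (-1:ℂ)^k = 1 := by rw [← mul_pow]; norm_num
      field_simp
      linear_combination (-(z^k)) * hsq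
    have hB : (1-z)^(n-k) = ∑ j ∈ Finset.range (n+1-k), (((n-k).choose j : ℂ)) * (-1:ℂ)^j * z^j := by
      have h2 : n + 1 - k = (n-k) + 1 := by omega
      rw [show (1:ℂ) - z = -z + 1 by ring, add_pow, h2]
      refine Finset.sum_congr rfl fun j hj => ?_
      rw [neg_pow]
      ring
    calc (1-z)^n * (poch (-(n:ℂ)) k * poch (c-a) k / (poch c k * (Nat.factorial k : ℂ)) * (z/(z-1))^k)
        = (poch (-(n:ℂ)) k * poch (c-a) k / (poch c k * (Nat.factorial k : ℂ)))
            * ((1-z)^n * (z/(z-1))^k) := by ring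
      _ = (poch (-(n:ℂ)) k * poch (c-a) k / (poch c k * (Nat.factorial k : ℂ)))
            * ((-1:ℂ)^k * z^k * ∑ j ∈ Finset.range (n+1-k), (((n-k).choose j : ℂ)) * (-1:ℂ)^j * z^j) := by
          rw [hA, hB]
      _ = _ := by
          rw [Finset.mul_sum, Finset.mul_sum]
          refine Finset.sum_congr rfl fun j hj => ?_
          rw [pow_add, pow_add]
          ring
  rw [Finset.sum_congr rfl hR, tri n]
  refine Finset.sum_congr rfl fun m hm => ?_
  have hm' : m ≤ n := Nat.lt_succ_iff.mp (Finset.mem_range.mp hm)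
  have hfac : ∀ k : ℕ, ((Nat.factorial k : ℂ)) ≠ 0 := fun k => by
    exact_mod_cast Nat.factorial_ne_zero k
  have hstep : ∀ k ∈ Finset.range (m+1),
      poch (-(n:ℂ)) k * poch (c-a) k / (poch c k * (Nat.factorial k : ℂ))
        * (((n-k).choose (m-k) : ℂ)) * (-1:ℂ)^(k+(m-k)) * z^(k+(m-k))
      = ((n.choose m : ℂ) * ((-1:ℂ)^m * z^m))
          * ((-1:ℂ)^k * (m.choose k : ℂ) * poch (c-a) k / poch c k) := by
    intro k hk
    have hk' : k ≤ m := Nat.lt_succ_iff.mp (Finset.mem_range.mp hk)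
    have hkm : k + (m - k) = m := Nat.add_sub_cancel' hk'
    have hcc : (n.choose m : ℂ) * (m.choose k : ℂ) = (n.choose k : ℂ) * ((n-k).choose (m-k) : ℂ) := by
      exact_mod_cast congrArg (Nat.cast : ℕ → ℂ) (Nat.choose_mul (n := n) hk')
    rw [hkm, poch_neg_nat, Nat.descFactorial_eq_factorial_mul_choose]
    have hpk := poch_ne_zero hc k
    have hkf : ((Nat.factorial k : ℂ)) ≠ 0 := hfac k
    push_cast
    field_simp
    linear_combination (-(poch (c-a) k * z^m)) * hcc
  rw [Finset.sum_congr rfl hstep, ← Finset.mul_sum, chu m a c hc]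
  have hpm := poch_ne_zero hc m
  rw [poch_neg_nat, Nat.descFactorial_eq_factorial_mul_choose]
  have hmf : ((Nat.factorial m : ℂ)) ≠ 0 := hfac m
  push_cast
  field_simp
end

section
/- For all x ∈ ℂ where both sides are defined (x not an integer), Γ'(x)/Γ(x)² = Γ'(1-x)/(Γ(x)Γ(1-x)) - cos(πx)·Γ(1-x). Moreover, the left-hand side x ↦ Γ'(x)/Γ(x)² extends to an entire function, and at x = -m for m ∈ ℤ≥0 its value is (-1)^{m+1} m!. -/
open Complex Real

noncomputable def F (z : ℂ) : ℂ := Complex.Gamma (1 - z) * Complex.sin (Real.pi * z) / Real.pi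

lemma hasDerivAt_F (x : ℂ) (h : ∀ m : ℕ, (1 : ℂ) - x ≠ -m) :
    HasDerivAt F
      ((deriv Complex.Gamma (1 - x) * (-1) * Complex.sin (Real.pi * x) +
        Complex.Gamma (1 - x) * (Complex.cos (Real.pi * x) * Real.pi)) / Real.pi) x := by
  have h1 : HasDerivAt (fun z : ℂ => Complex.Gamma (1 - z)) (deriv Complex.Gamma (1 - x) * (-1)) x := by
    have hg := (Complex.differentiableAt_Gamma _ h).hasDerivAt
    exact hg.comp x ((hasDerivAt_id x).const_sub 1)
  have h2 : HasDerivAt (fun z : ℂ => Complex.sin (Real.pi * z)) (Complex.cos (Real.pi * x) * Real.pi) x := by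
    have h2' : HasDerivAt (fun z : ℂ => Complex.sin ((Real.pi : ℂ) * z))
        (Complex.cos ((Real.pi : ℂ) * x) * ((Real.pi : ℂ) * 1)) x :=
      (Complex.hasDerivAt_sin _).comp x ((hasDerivAt_id x).const_mul _)
    simpa [Function.comp] using h2'
  exact (h1.mul h2).div_const _

lemma F_eq (z : ℂ) (hz : ∀ m : ℤ, z ≠ (m : ℂ)) : F z = (Complex.Gamma z)⁻¹ := by
  have hs : Complex.sin (Real.pi * z) ≠ 0 := by
    rw [Complex.sin_ne_zero_iff]
    intro k hk
    have hpi : (Real.pi : ℂ) ≠ 0 := Complex.ofReal_ne_zero.2 Real.pi_ne_zero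
    apply hz k
    have h2 : (Real.pi : ℂ) * z = (Real.pi : ℂ) * k := by rw [hk]; ring
    exact mul_left_cancel₀ hpi h2
  have hΓ : Complex.Gamma z ≠ 0 := by
    apply Complex.Gamma_ne_zero
    intro m hm
    exact hz (-m) (by push_cast [hm]; ring)
  have hrefl := Complex.Gamma_mul_Gamma_one_sub z
  have hpi : (Real.pi : ℂ) ≠ 0 := Complex.ofReal_ne_zero.2 Real.pi_ne_zero
  have key : Complex.Gamma z * Complex.Gamma (1 - z) * Complex.sin (Real.pi * z) = Real.pi := by
    rw [hrefl]; field_simp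
  rw [F, div_eq_iff hpi, eq_comm, inv_mul_eq_div, div_eq_iff hΓ]
  linear_combination -key

theorem gamma_deriv_reflection_and_entire_extension :
    (∀ x : ℂ, (∀ m : ℤ, x ≠ (m : ℂ)) →
      deriv Complex.Gamma x / Complex.Gamma x ^ 2 =
        deriv Complex.Gamma (1 - x) / (Complex.Gamma x * Complex.Gamma (1 - x)) -
          Complex.cos ((Real.pi : ℂ) * x) * Complex.Gamma (1 - x)) ∧
    ∃ g : ℂ → ℂ, Differentiable ℂ g ∧
      (∀ x : ℂ, (∀ m : ℕ, x ≠ -(m : ℂ)) →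
        g x = deriv Complex.Gamma x / Complex.Gamma x ^ 2) ∧
      (∀ m : ℕ, g (-(m : ℂ)) = (-1) ^ (m + 1) * (Nat.factorial m : ℂ)) := by
  have hpi : (Real.pi : ℂ) ≠ 0 := Complex.ofReal_ne_zero.2 Real.pi_ne_zero
  have hsin_ne : ∀ z : ℂ, (∀ m : ℤ, z ≠ (m : ℂ)) → Complex.sin (Real.pi * z) ≠ 0 := by
    intro z hz
    rw [Complex.sin_ne_zero_iff]
    intro k hk
    apply hz k
    have h2 : (Real.pi : ℂ) * z = (Real.pi : ℂ) * k := by rw [hk]; ring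
    exact mul_left_cancel₀ hpi h2
  have hopen : IsOpen {z : ℂ | Complex.sin ((Real.pi : ℂ) * z) ≠ 0} :=
    isOpen_compl_singleton.preimage (Complex.continuous_sin.comp (continuous_const.mul continuous_id))
  have hmem_int : ∀ z : ℂ, Complex.sin ((Real.pi : ℂ) * z) ≠ 0 → ∀ m : ℤ, z ≠ (m : ℂ) := by
    intro z hz m hm
    apply hz
    rw [hm, Complex.sin_eq_zero_iff]
    exact ⟨m, (mul_comm _ _)⟩
  constructor
  · intro x hx
    have hs := hsin_ne x hx
    have h1x : ∀ m : ℕ, (1 : ℂ) - x ≠ -m := by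
      intro m hm
      apply hx (m + 1)
      push_cast
      linear_combination -hm
    have hxΓ : ∀ m : ℕ, x ≠ -m := by
      intro m hm
      apply hx (-m)
      push_cast
      exact hm
    have hΓx : Complex.Gamma x ≠ 0 := Complex.Gamma_ne_zero hxΓ
    have hΓ1x : Complex.Gamma (1 - x) ≠ 0 := Complex.Gamma_ne_zero h1x
    have hinv : HasDerivAt (fun z => (Complex.Gamma z)⁻¹)
        (-(deriv Complex.Gamma x) / Complex.Gamma x ^ 2) x :=
      (Complex.differentiableAt_Gamma _ hxΓ).hasDerivAt.inv hΓx
    have hF := hasDerivAt_F x h1x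
    have heq : (fun z => (Complex.Gamma z)⁻¹) =ᶠ[nhds x] F := by
      filter_upwards [hopen.mem_nhds hs] with z hz
      exact (F_eq z (hmem_int z hz)).symm
    have hder : -(deriv Complex.Gamma x) / Complex.Gamma x ^ 2 =
        (deriv Complex.Gamma (1 - x) * (-1) * Complex.sin (Real.pi * x) +
          Complex.Gamma (1 - x) * (Complex.cos (Real.pi * x) * Real.pi)) / Real.pi := by
      rw [← hinv.deriv, ← hF.deriv]
      exact heq.deriv_eq
    have key : Complex.Gamma x * Complex.Gamma (1 - x) * Complex.sin (Real.pi * x) = Real.pi := by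
      rw [Complex.Gamma_mul_Gamma_one_sub]; field_simp
    field_simp at hder ⊢
    simp only [mul_comm x (Real.pi : ℂ)] at hder ⊢
    have hG : (deriv Complex.Gamma x * Complex.Gamma x * Complex.Gamma (1 - x) -
        Complex.Gamma x ^ 2 * deriv Complex.Gamma (1 - x) +
        Complex.Gamma x ^ 3 * Complex.Gamma (1 - x) ^ 2 * Complex.cos (Real.pi * x)) *
        Complex.sin (Real.pi * x) = 0 := by
      linear_combination (-1 : ℂ) * hder +
        (deriv Complex.Gamma x +
          Complex.Gamma x ^ 2 * Complex.Gamma (1 - x) * Complex.cos (Real.pi * x)) * key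
    have hG0 := (mul_eq_zero.mp hG).resolve_right hs
    apply mul_left_cancel₀ hΓx
    linear_combination hG0
  · refine ⟨fun x => -deriv (fun z => (Complex.Gamma z)⁻¹) x, ?_, ?_, ?_⟩
    · have hana : AnalyticOnNhd ℂ (fun z => (Complex.Gamma z)⁻¹) Set.univ :=
        fun z _ => Complex.differentiable_one_div_Gamma.analyticAt z
      have hd := hana.deriv
      have hdiff : Differentiable ℂ (deriv (fun z => (Complex.Gamma z)⁻¹)) :=
        fun z => (hd z trivial).differentiableAt
      exact hdiff.neg
    · intro x hx
      have hΓx : Complex.Gamma x ≠ 0 := Complex.Gamma_ne_zero hx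
      have hinv : HasDerivAt (fun z => (Complex.Gamma z)⁻¹)
          (-(deriv Complex.Gamma x) / Complex.Gamma x ^ 2) x :=
        (Complex.differentiableAt_Gamma _ hx).hasDerivAt.inv hΓx
      show -deriv (fun z => (Complex.Gamma z)⁻¹) x = _
      rw [hinv.deriv, neg_div, neg_neg]
    · intro m
      have h1m : ∀ k : ℕ, (1 : ℂ) - (-(m : ℂ)) ≠ -k := by
        intro k hk
        have h0 : ((1 + m + k : ℕ) : ℂ) = 0 := by push_cast; linear_combination hk
        exact Nat.cast_ne_zero.2 (by omega) h0
      have hF := hasDerivAt_F (-(m : ℂ)) h1m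
      have hptwise : ∀ z : ℂ, dist z (-(m : ℂ)) < 1/2 → (Complex.Gamma z)⁻¹ = F z := by
        intro z hz
        by_cases hzm : z = -(m : ℂ)
        · subst hzm
          rw [Complex.Gamma_neg_nat_eq_zero, inv_zero, F]
          have : Complex.sin ((Real.pi : ℂ) * (-(m : ℂ))) = 0 := by
            rw [Complex.sin_eq_zero_iff]
            exact ⟨-m, by push_cast; ring⟩
          rw [this, mul_zero, zero_div]
        · refine (F_eq z ?_).symm
          intro k hk
          subst hk
          rcases eq_or_ne (k + m : ℤ) 0 with h | h
          · refine absurd ?_ hzm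
            have hk' : k = -(m : ℤ) := by omega
            rw [hk']; push_cast; ring
          · have h1 : (1 : ℝ) ≤ |((k + m : ℤ) : ℝ)| := by
              rw [← Int.cast_abs]
              exact_mod_cast Int.one_le_abs h
            have h2 : dist ((k : ℂ)) (-(m : ℂ)) = ‖((k + m : ℤ) : ℂ)‖ := by
              rw [Complex.dist_eq]
              push_cast
              ring_nf
            rw [h2, Complex.norm_intCast] at hz
            push_cast at hz h1
            linarith
      have heq : (fun z => (Complex.Gamma z)⁻¹) =ᶠ[nhds (-(m : ℂ))] F := by
        have h : ∀ᶠ z in nhds (-(m : ℂ)), (Complex.Gamma z)⁻¹ = F z := by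
          rw [Metric.eventually_nhds_iff]
          exact ⟨1/2, by norm_num, fun z hz => hptwise z hz⟩
        exact h
      have hderiv : deriv (fun z => (Complex.Gamma z)⁻¹) (-(m : ℂ)) =
          (deriv Complex.Gamma (1 - -(m : ℂ)) * (-1) * Complex.sin (Real.pi * -(m : ℂ)) +
            Complex.Gamma (1 - -(m : ℂ)) * (Complex.cos (Real.pi * -(m : ℂ)) * Real.pi)) / Real.pi := by
        rw [heq.deriv_eq]
        exact hF.deriv
      have hsin0 : Complex.sin ((Real.pi : ℂ) * -(m : ℂ)) = 0 := by
        rw [Complex.sin_eq_zero_iff]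
        exact ⟨-m, by push_cast; ring⟩
      have hcos : Complex.cos ((Real.pi : ℂ) * -(m : ℂ)) = (-1) ^ m := by
        have hr : Real.cos (m * Real.pi) = (-1) ^ m := by
          simpa using Real.cos_nat_mul_pi_sub 0 m
        have : ((Real.pi : ℂ) * -(m : ℂ)) = -((m * Real.pi : ℝ) : ℂ) := by push_cast; ring
        rw [this, Complex.cos_neg, ← Complex.ofReal_cos, hr]
        push_cast
        ring
      have hΓfac : Complex.Gamma (1 - -(m : ℂ)) = (Nat.factorial m : ℂ) := by
        rw [show (1 : ℂ) - -(m : ℂ) = (m : ℂ) + 1 by ring]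
        exact Complex.Gamma_nat_eq_factorial m
      show -deriv (fun z => (Complex.Gamma z)⁻¹) (-(m : ℂ)) = _
      rw [hderiv, hsin0, hcos, hΓfac]
      field_simp
      ring
end

section
/- For b not a nonpositive integer and n, k nonnegative integers with k ≥ n+1, the limit lim_{b→-n} (b)_k · ψ(1-b-k) = (-1)^n n! (k-n-1)!, where (b)_k is the Pochhammer symbol and ψ the digamma function. -/
open Filter Topology

/-- The digamma function `ψ = Γ'/Γ`. -/
noncomputable def psi (x : ℂ) : ℂ := deriv Complex.Gamma x / Complex.Gamma x

open Complex in
lemma psi_add_one (z : ℂ) (hz : ∀ m : ℕ, z ≠ -m) : psi (z + 1) = psi z + 1 / z := by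
  have hz0 : z ≠ 0 := by simpa using hz 0
  have hz1 : ∀ m : ℕ, z + 1 ≠ -m := by
    intro m h
    apply hz (m+1); push_cast; linear_combination h
  have hd : DifferentiableAt ℂ Gamma z := differentiableAt_Gamma z hz
  have hd1 : DifferentiableAt ℂ Gamma (z+1) := differentiableAt_Gamma _ hz1
  have hG : Gamma z ≠ 0 := Gamma_ne_zero hz
  have h1 : HasDerivAt (fun w => Gamma (w + 1)) (deriv Gamma (z+1)) z := by
    simpa [Function.comp_def] using (hd1.hasDerivAt.comp z ((hasDerivAt_id z).add_const 1))
  have h2 : HasDerivAt (fun w => w * Gamma w) (1 * Gamma z + z * deriv Gamma z) z :=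
    (hasDerivAt_id z).mul hd.hasDerivAt
  have heq : (fun w => Gamma (w + 1)) =ᶠ[𝓝 z] (fun w => w * Gamma w) := by
    filter_upwards [eventually_ne_nhds hz0] with w hw
    exact Gamma_add_one w hw
  have h3 : deriv Gamma (z+1) = Gamma z + z * deriv Gamma z := by
    have := (h2.congr_of_eventuallyEq heq).unique h1
    rw [← this]; ring
  unfold psi
  rw [h3, Gamma_add_one z hz0]
  field_simp
  ring

lemma psi_add_nat (z : ℂ) (hz : ∀ m : ℕ, z ≠ -m) (m : ℕ) :
    psi (z + m + 1) = psi z + ∑ j ∈ Finset.range (m + 1), 1 / (z + j) := by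
  induction m with
  | zero => simpa using psi_add_one z hz
  | succ m ih =>
    have hz' : ∀ i : ℕ, z + m + 1 ≠ -i := by
      intro i h
      apply hz (i + m + 1); push_cast; linear_combination h
    have : psi ((z + m + 1) + 1) = psi (z + m + 1) + 1 / (z + m + 1) :=
      psi_add_one _ hz'
    rw [show (z + (m+1 : ℕ) + 1 : ℂ) = (z + m + 1) + 1 by push_cast; ring, this, ih]
    conv_rhs => rw [Finset.sum_range_succ]
    push_cast
    ring

open Complex in
lemma continuousAt_psi_one : ContinuousAt psi 1 := by
  have hS : IsOpen {z : ℂ | 0 < z.re} := isOpen_lt continuous_const continuous_re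
  have hd : DifferentiableOn ℂ Gamma {z : ℂ | 0 < z.re} := by
    intro z hz
    refine (differentiableAt_Gamma z fun m hm => ?_).differentiableWithinAt
    have : (0:ℝ) < z.re := hz
    rw [hm] at this
    simp at this
    have := this.trans_le (Nat.cast_nonneg m)
    exact lt_irrefl _ this
  have hA : AnalyticOnNhd ℂ Gamma {z : ℂ | 0 < z.re} :=
    (analyticOnNhd_iff_differentiableOn hS).mpr hd
  have h1 : (1:ℂ) ∈ {z : ℂ | 0 < z.re} := by simp
  have hderiv : ContinuousAt (deriv Gamma) 1 := ((hA.deriv) 1 h1).continuousAt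
  have hGcont : ContinuousAt Gamma 1 := ((hA 1 h1).continuousAt)
  have hGne : Gamma (1:ℂ) ≠ 0 := by
    rw [Complex.Gamma_one]; exact one_ne_zero
  exact hderiv.div hGcont hGne

lemma eventually_ne_nat (m : ℕ) :
    ∀ᶠ z : ℂ in 𝓝[≠] (-(m : ℂ)), ∀ i : ℕ, z ≠ -i := by
  have hball : ∀ᶠ z : ℂ in 𝓝[≠] (-(m:ℂ)), dist z (-(m:ℂ)) < 1/2 :=
    eventually_nhdsWithin_of_eventually_nhds (Metric.ball_mem_nhds _ (by norm_num))
  filter_upwards [hball, self_mem_nhdsWithin] with z hz hzne i hi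
  rcases eq_or_ne i m with rfl | him
  · exact hzne (by simpa using hi)
  · subst hi
    rw [Complex.dist_eq] at hz
    have hne : ((m:ℤ) - (i:ℤ)) ≠ 0 := sub_ne_zero.mpr (fun h => him (by exact_mod_cast h.symm))
    have h2 : (1:ℤ) ≤ |(m:ℤ) - (i:ℤ)| := Int.one_le_abs hne
    have h1 : (1:ℝ) ≤ ‖(-(i:ℂ) - -(m:ℂ))‖ := by
      have he : (-(i:ℂ) - -(m:ℂ)) = (((m:ℤ) - (i:ℤ) : ℤ) : ℂ) := by push_cast; ring
      rw [he, Complex.norm_intCast]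
      exact_mod_cast h2
    linarith

lemma tendsto_psi_pole (m : ℕ) :
    Tendsto (fun z : ℂ => (z + m) * psi z) (𝓝[≠] (-(m : ℂ))) (𝓝 (-1)) := by
  have hev : ∀ᶠ z : ℂ in 𝓝[≠] (-(m:ℂ)),
      (z + m) * psi z = (z + m) * psi (z + m + 1)
        - (∑ j ∈ Finset.range m, (z + m) / (z + j)) - 1 := by
    filter_upwards [eventually_ne_nat m, self_mem_nhdsWithin] with z hz hzne
    have hzm : z + m ≠ 0 := by
      intro h
      apply hzne
      simp only [Set.mem_singleton_iff]
      linear_combination h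
    have hrec := psi_add_nat z hz m
    have hψ : psi z = psi (z + m + 1) - ∑ j ∈ Finset.range (m+1), 1 / (z + j) := by
      rw [hrec]; ring
    have hinv : (z + (m:ℂ)) * (1 / (z + m)) = 1 := by field_simp
    rw [hψ, Finset.sum_range_succ, mul_sub, mul_add, hinv, Finset.mul_sum]
    simp only [mul_one_div]
    ring
  have hzm1 : Tendsto (fun z : ℂ => z + m + 1) (𝓝[≠] (-(m:ℂ))) (𝓝 1) := by
    have : Tendsto (fun z : ℂ => z + m + 1) (𝓝 (-(m:ℂ))) (𝓝 (-(m:ℂ) + m + 1)) :=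
      (continuous_id.add continuous_const).add continuous_const |>.tendsto _
    simpa using this.mono_left nhdsWithin_le_nhds
  have h1 : Tendsto (fun z : ℂ => (z + m) * psi (z + m + 1)) (𝓝[≠] (-(m:ℂ))) (𝓝 0) := by
    have ha : Tendsto (fun z : ℂ => z + m) (𝓝[≠] (-(m:ℂ))) (𝓝 0) := by
      have : Tendsto (fun z : ℂ => z + m) (𝓝 (-(m:ℂ))) (𝓝 (-(m:ℂ) + m)) :=
        (continuous_id.add continuous_const).tendsto _
      simpa using this.mono_left nhdsWithin_le_nhds
    have hb : Tendsto (fun z : ℂ => psi (z + m + 1)) (𝓝[≠] (-(m:ℂ))) (𝓝 (psi 1)) :=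
      (continuousAt_psi_one.tendsto).comp hzm1
    simpa using ha.mul hb
  have h2 : Tendsto (fun z : ℂ => ∑ j ∈ Finset.range m, (z + m) / (z + j))
      (𝓝[≠] (-(m:ℂ))) (𝓝 0) := by
    have : Tendsto (fun z : ℂ => ∑ j ∈ Finset.range m, (z + m) / (z + j))
        (𝓝[≠] (-(m:ℂ))) (𝓝 (∑ j ∈ Finset.range m, ((-(m:ℂ) + m) / (-(m:ℂ) + j)))) := by
      apply tendsto_finset_sum
      intro j hj
      have hj' := Finset.mem_range.mp hj
      have hden : (-(m:ℂ) + j) ≠ 0 := by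
        intro h
        have h1 : (m:ℂ) = j := by linear_combination -h
        have h2 : m = j := by exact_mod_cast h1
        omega
      have hnum : Tendsto (fun z : ℂ => z + m) (𝓝[≠] (-(m:ℂ))) (𝓝 (-(m:ℂ) + m)) :=
        (((continuous_id.add continuous_const).tendsto _).mono_left nhdsWithin_le_nhds)
      have hdent : Tendsto (fun z : ℂ => z + j) (𝓝[≠] (-(m:ℂ))) (𝓝 (-(m:ℂ) + j)) :=
        (((continuous_id.add continuous_const).tendsto _).mono_left nhdsWithin_le_nhds)
      exact hnum.div hdent hden
    have hzero : (∑ j ∈ Finset.range m, ((-(m:ℂ) + m) / (-(m:ℂ) + j))) = 0 := by simp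
    rwa [hzero] at this
  have hF : Tendsto (fun z : ℂ => (z + m) * psi (z + m + 1)
      - (∑ j ∈ Finset.range m, (z + m) / (z + j)) - 1)
      (𝓝[≠] (-(m:ℂ))) (𝓝 (0 - 0 - 1)) := (h1.sub h2).sub tendsto_const_nhds
  rw [show (0:ℂ) - 0 - 1 = -1 by ring] at hF
  exact Tendsto.congr' (Filter.EventuallyEq.symm hev) hF

lemma poch_eq_prod (b : ℂ) (k : ℕ) : poch b k = ∏ j ∈ Finset.range k, (b + j) := by
  induction k with
  | zero => simp [poch]
  | succ k ih =>
    rw [poch, ascPochhammer_succ_right, Polynomial.eval_mul, Finset.prod_range_succ, ← ih]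
    simp [poch]

theorem pochhammer_mul_psi_limit (n k : ℕ) (hk : n + 1 ≤ k) :
    Tendsto (fun b : ℂ => poch b k * psi (1 - b - k)) (𝓝[≠] (-(n : ℂ)))
      (𝓝 ((-1) ^ n * (Nat.factorial n : ℂ) * (Nat.factorial (k - n - 1) : ℂ))) := by
  set m := k - n - 1 with hm
  have hkm : k = n + m + 1 := by omega
  have hmem : n ∈ Finset.range k := Finset.mem_range.mpr (by omega)
  -- the affine change of variables
  have hzmap : Tendsto (fun b : ℂ => 1 - b - k) (𝓝[≠] (-(n:ℂ))) (𝓝[≠] (-(m:ℂ))) := by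
    rw [tendsto_nhdsWithin_iff]
    constructor
    · have : Tendsto (fun b : ℂ => 1 - b - k) (𝓝 (-(n:ℂ))) (𝓝 (1 - (-(n:ℂ)) - k)) :=
        ((continuous_const.sub continuous_id).sub continuous_const).tendsto _
      have heq : (1 - (-(n:ℂ)) - k) = -(m:ℂ) := by
        rw [hkm]; push_cast; ring
      rw [heq] at this
      exact this.mono_left nhdsWithin_le_nhds
    · filter_upwards [self_mem_nhdsWithin] with b hb
      simp only [Set.mem_compl_iff, Set.mem_singleton_iff] at hb ⊢
      intro h
      apply hb
      rw [hkm] at h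
      push_cast at h
      linear_combination -h
  -- second factor tends to 1
  have hfac2 : Tendsto (fun b : ℂ => (b + n) * psi (1 - b - k)) (𝓝[≠] (-(n:ℂ))) (𝓝 1) := by
    have hcomp : Tendsto (fun b : ℂ => ((1 - b - k) + m) * psi (1 - b - k))
        (𝓝[≠] (-(n:ℂ))) (𝓝 (-1)) := (tendsto_psi_pole m).comp hzmap
    have heq : ∀ b : ℂ, (b + n) * psi (1 - b - k) = -(((1 - b - k) + m) * psi (1 - b - k)) := by
      intro b
      have : (b + n : ℂ) = -((1 - b - k) + m) := by
        rw [hkm]; push_cast; ring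
      rw [this]; ring
    simp only [heq]
    simpa using hcomp.neg
  -- first factor: continuous polynomial part
  have hfac1 : Tendsto (fun b : ℂ => ∏ j ∈ (Finset.range k).erase n, (b + j))
      (𝓝[≠] (-(n:ℂ))) (𝓝 (∏ j ∈ (Finset.range k).erase n, (-(n:ℂ) + j))) := by
    have : Continuous (fun b : ℂ => ∏ j ∈ (Finset.range k).erase n, (b + j)) :=
      continuous_finset_prod _ fun j _ => continuous_id.add continuous_const
    exact (this.tendsto _).mono_left nhdsWithin_le_nhds
  -- decompose poch
  have hdecomp : ∀ b : ℂ, poch b k =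
      (b + n) * ∏ j ∈ (Finset.range k).erase n, (b + j) := by
    intro b
    rw [poch_eq_prod, ← Finset.mul_prod_erase _ _ hmem]
  -- value of the product at -n
  have hval : ∏ j ∈ (Finset.range k).erase n, (-(n:ℂ) + j)
      = (-1) ^ n * (Nat.factorial n : ℂ) * (Nat.factorial m : ℂ) := by
    have hsplit : (Finset.range k).erase n = Finset.range n ∪ Finset.Ico (n+1) k := by
      ext j
      simp only [Finset.mem_erase, Finset.mem_range, Finset.mem_union, Finset.mem_Ico]
      omega
    have hdisj : Disjoint (Finset.range n) (Finset.Ico (n+1) k) := by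
      rw [Finset.disjoint_left]
      intro j hj hj'
      simp only [Finset.mem_range] at hj
      simp only [Finset.mem_Ico] at hj'
      omega
    rw [hsplit, Finset.prod_union hdisj]
    have h1 : ∏ j ∈ Finset.range n, (-(n:ℂ) + j) = (-1) ^ n * (Nat.factorial n : ℂ) := by
      rw [← Finset.prod_range_reflect (fun j => (-(n:ℂ) + j)) n]
      have : ∀ j ∈ Finset.range n, (-(n:ℂ) + ((n - 1 - j : ℕ) : ℂ)) = (-1) * ((j:ℂ) + 1) := by
        intro j hj
        have hjn : j < n := Finset.mem_range.mp hj
        have : ((n - 1 - j : ℕ) : ℂ) = (n:ℂ) - 1 - j := by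
          push_cast [Nat.cast_sub (by omega : j ≤ n - 1), Nat.cast_sub (by omega : 1 ≤ n)]
          ring
        rw [this]; ring
      rw [Finset.prod_congr rfl this, Finset.prod_mul_distrib, Finset.prod_const,
        Finset.card_range]
      congr 1
      have := Finset.prod_range_add_one_eq_factorial n
      have := congrArg (Nat.cast : ℕ → ℂ) this
      push_cast at this
      exact this
    have h2 : ∏ j ∈ Finset.Ico (n+1) k, (-(n:ℂ) + j) = (Nat.factorial m : ℂ) := by
      rw [Finset.prod_Ico_eq_prod_range]
      have hcard : k - (n + 1) = m := by omega
      rw [hcard]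
      have : ∀ j ∈ Finset.range m, (-(n:ℂ) + ((n + 1 + j : ℕ) : ℂ)) = ((j:ℂ) + 1) := by
        intro j hj; push_cast; ring
      rw [Finset.prod_congr rfl this]
      have := Finset.prod_range_add_one_eq_factorial m
      have := congrArg (Nat.cast : ℕ → ℂ) this
      push_cast at this
      exact this
    rw [h1, h2]
  -- combine
  have hmain : Tendsto (fun b : ℂ =>
      (∏ j ∈ (Finset.range k).erase n, (b + j)) * ((b + n) * psi (1 - b - k)))
      (𝓝[≠] (-(n:ℂ)))
      (𝓝 ((∏ j ∈ (Finset.range k).erase n, (-(n:ℂ) + j)) * 1)) := hfac1.mul hfac2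
  rw [hval, mul_one] at hmain
  refine hmain.congr fun b => ?_
  rw [hdecomp b]; ring
end

section
/- Let n, m, ℓ be nonnegative integers. Then (1-z)^{-ℓ-1} · 2F1(-m, ℓ+1; -n-m; z/(z-1)) = 2F1(-n, ℓ+1; -n-m; z) + (-1)^m (n!(m+ℓ)!/(ℓ!(n+m)!)) · z^{n+m+1}(1-z)^{-m-ℓ-1} · 2F1(-ℓ, n+1; -m-ℓ; 1-z), for all z ∉ {0,1} where defined. -/
open Finset

namespace TMC

open Polynomial PowerSeries

noncomputable def Gs (c : ℂ) (d : ℕ) : PowerSeries ℂ :=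
  PowerSeries.mk fun i => ((d + i).choose i : ℂ) * c ^ i

lemma coeff_Gs (c : ℂ) (d i : ℕ) :
    PowerSeries.coeff i (Gs c d) = ((d + i).choose i : ℂ) * c ^ i := by
  simp [Gs]

lemma one_sub_mul_Gs_zero (c : ℂ) :
    (1 - PowerSeries.C c * PowerSeries.X) * Gs c 0 = 1 := by
  ext k
  rw [sub_mul, one_mul, map_sub, mul_assoc]
  cases k with
  | zero => simp [Gs]
  | succ k =>
    rw [PowerSeries.coeff_C_mul, PowerSeries.coeff_succ_X_mul]
    simp [Gs, pow_succ]
    ring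

lemma one_sub_mul_Gs_succ (c : ℂ) (d : ℕ) :
    (1 - PowerSeries.C c * PowerSeries.X) * Gs c (d + 1) = Gs c d := by
  ext k
  rw [sub_mul, one_mul, map_sub, mul_assoc]
  cases k with
  | zero => simp [Gs]
  | succ k =>
    rw [PowerSeries.coeff_C_mul, PowerSeries.coeff_succ_X_mul]
    simp only [coeff_Gs]
    have h : (d + 1 + (k + 1)).choose (k + 1)
        = (d + (k + 1)).choose (k + 1) + (d + 1 + k).choose k := by
      rw [show d + 1 + (k + 1) = (d + k + 1) + 1 by ring]
      rw [Nat.choose_succ_succ]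
      rw [show d + k + 1 = d + 1 + k by ring, show d + (k+1) = d + 1 + k by ring]
      ring
    rw [h]
    push_cast
    ring

lemma pow_mul_Gs (c : ℂ) (d : ℕ) :
    (1 - PowerSeries.C c * PowerSeries.X) ^ (d + 1) * Gs c d = 1 := by
  induction d with
  | zero => rw [pow_one, one_sub_mul_Gs_zero]
  | succ d ih =>
    rw [pow_succ, mul_comm ((1 - PowerSeries.C c * PowerSeries.X) ^ (d+1)), mul_assoc]
    rw [show (1 - PowerSeries.C c * PowerSeries.X) ^ (d+1) * Gs c (d+1)
        = Gs c (d+1) * (1 - PowerSeries.C c * PowerSeries.X) ^ (d+1) from mul_comm _ _]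
    rw [← mul_assoc, one_sub_mul_Gs_succ]
    rw [mul_comm, ih]

noncomputable def Hs (a : ℂ) (d : ℕ) : PowerSeries ℂ :=
  PowerSeries.C ((-a⁻¹) ^ (d + 1)) * Gs a⁻¹ d

lemma coeff_Hs (a : ℂ) (d i : ℕ) :
    PowerSeries.coeff i (Hs a d) = (-a⁻¹) ^ (d + 1) * (((d + i).choose i : ℂ) * a⁻¹ ^ i) := by
  rw [Hs, PowerSeries.coeff_C_mul, coeff_Gs]

lemma coe_X_sub_C_pow_mul_Hs {a : ℂ} (ha : a ≠ 0) (d : ℕ) :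
    (((Polynomial.X - Polynomial.C a) ^ (d + 1) : Polynomial ℂ) : PowerSeries ℂ) * Hs a d = 1 := by
  have h1 : ((Polynomial.X - Polynomial.C a : Polynomial ℂ) : PowerSeries ℂ)
      = PowerSeries.C (-a) * (1 - PowerSeries.C a⁻¹ * PowerSeries.X) := by
    rw [mul_sub, mul_one, ← mul_assoc, ← map_mul]
    rw [show -a * a⁻¹ = -1 by field_simp]
    push_cast [Polynomial.coe_sub, Polynomial.coe_X, Polynomial.coe_C]
    simp
    ring
  rw [Polynomial.coe_pow, h1, mul_pow, Hs, ← map_pow]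
  calc (PowerSeries.C ((-a) ^ (d+1)) * (1 - PowerSeries.C a⁻¹ * PowerSeries.X) ^ (d + 1)) *
      (PowerSeries.C ((-a⁻¹) ^ (d + 1)) * Gs a⁻¹ d)
      = (PowerSeries.C ((-a) ^ (d+1)) * PowerSeries.C ((-a⁻¹) ^ (d + 1))) *
        ((1 - PowerSeries.C a⁻¹ * PowerSeries.X) ^ (d + 1) * Gs a⁻¹ d) := by ring
    _ = 1 := by
        rw [pow_mul_Gs, mul_one, ← map_mul, ← mul_pow]
        rw [show -a * -a⁻¹ = 1 by field_simp]
        simp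


lemma poly_dvd_of_coe {f : Polynomial ℂ} {N : ℕ}
    (h : (PowerSeries.X : PowerSeries ℂ) ^ N ∣ (f : PowerSeries ℂ)) :
    (Polynomial.X : Polynomial ℂ) ^ N ∣ f := by
  rw [Polynomial.X_pow_dvd_iff]
  intro d hd
  have := PowerSeries.X_pow_dvd_iff.mp h d hd
  rwa [Polynomial.coeff_coe] at this

lemma dvd_comp_shift {f : Polynomial ℂ} {a : ℂ} {N : ℕ}
    (h : Polynomial.X ^ N ∣ f.comp (Polynomial.X + Polynomial.C a)) :
    (Polynomial.X - Polynomial.C a) ^ N ∣ f := by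
  obtain ⟨g, hg⟩ := h
  refine ⟨g.comp (Polynomial.X - Polynomial.C a), ?_⟩
  have h2 := congrArg (fun p : Polynomial ℂ => p.comp (Polynomial.X - Polynomial.C a)) hg
  have hXa : (Polynomial.X + Polynomial.C a).comp (Polynomial.X - Polynomial.C a)
      = (Polynomial.X : Polynomial ℂ) := by
    rw [Polynomial.add_comp, Polynomial.X_comp, Polynomial.C_comp]; ring
  simp only [Polynomial.comp_assoc, Polynomial.mul_comp, Polynomial.pow_comp,
    Polynomial.X_comp, Polynomial.C_comp, hXa] at h2
  rwa [Polynomial.comp_X] at h2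

lemma coeff_comp_top {p : Polynomial ℂ} {a : ℂ} {d : ℕ} (hp : p.natDegree ≤ d) :
    (p.comp (Polynomial.X - Polynomial.C a)).coeff d = p.coeff d := by
  conv_lhs => rw [p.as_sum_range' (d + 1) (Nat.lt_succ_of_le hp)]
  rw [Polynomial.comp, Polynomial.eval₂_finset_sum, Polynomial.finset_sum_coeff]
  rw [Finset.sum_eq_single d]
  · rw [Polynomial.eval₂_monomial, Polynomial.coeff_C_mul]
    have hm : ((Polynomial.X - Polynomial.C a) ^ d).coeff d = 1 := by
      have := (monic_X_sub_C a).pow d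
      have hdeg : ((Polynomial.X - Polynomial.C a) ^ d).natDegree = d := by
        rw [natDegree_pow, natDegree_X_sub_C, mul_one]
      have h2 := this.coeff_natDegree
      rwa [hdeg] at h2
    rw [hm, mul_one]
  · intro i hi hne
    rw [Polynomial.eval₂_monomial, Polynomial.coeff_C_mul]
    have hdeg : ((Polynomial.X - Polynomial.C a) ^ i).natDegree = i := by
      rw [natDegree_pow, natDegree_X_sub_C, mul_one]
    have : ((Polynomial.X - Polynomial.C a) ^ i).coeff d = 0 := by
      apply Polynomial.coeff_eq_zero_of_natDegree_lt
      rw [hdeg]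
      rcases Nat.lt_or_ge i d with h | h
      · exact h
      · exact absurd (Nat.le_antisymm (Nat.lt_succ_iff.mp (Finset.mem_range.mp hi)) h) hne
    rw [this, mul_zero]
  · intro h
    exact absurd (Finset.self_mem_range_succ d) h

lemma coeff_mul_top {p q : Polynomial ℂ} {d e : ℕ} (hp : p.natDegree ≤ d) (hq : q.natDegree ≤ e) :
    (p * q).coeff (d + e) = p.coeff d * q.coeff e := by
  rw [Polynomial.coeff_mul]
  apply Finset.sum_eq_single (d, e)
  · rintro ⟨i, j⟩ hij hne
    rw [Finset.HasAntidiagonal.mem_antidiagonal] at hij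
    rcases Nat.lt_or_ge d i with h | h
    · rw [Polynomial.coeff_eq_zero_of_natDegree_lt (lt_of_le_of_lt hp h), zero_mul]
    · have : e < j := by
        rcases Nat.lt_or_ge e j with h' | h'
        · exact h'
        · exfalso; apply hne
          have : i = d := by omega
          subst this; simp at hij ⊢; omega
      rw [Polynomial.coeff_eq_zero_of_natDegree_lt (lt_of_le_of_lt hq this), mul_zero]
  · intro h
    exact absurd (by simp : (d, e) ∈ Finset.HasAntidiagonal.antidiagonal (d + e)) h

noncomputable def Fser (a b c : ℂ) (nb nc : ℕ) : PowerSeries ℂ := Hs (b - a) nb * Hs (c - a) nc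

noncomputable def Ppol (a b c : ℂ) (na nb nc : ℕ) : Polynomial ℂ :=
  (PowerSeries.trunc (na + 1) (Fser a b c nb nc)).comp (Polynomial.X - Polynomial.C a)

noncomputable def Spol (b c : ℂ) (nb nc : ℕ) : Polynomial ℂ :=
  (Polynomial.X - Polynomial.C b) ^ (nb + 1) * (Polynomial.X - Polynomial.C c) ^ (nc + 1)

lemma coe_Spol_mul_Fser (a b c : ℂ) (hb : b ≠ a) (hc : c ≠ a) (nb nc : ℕ) :
    ((Spol (b - a) (c - a) nb nc : Polynomial ℂ) : PowerSeries ℂ) * Fser a b c nb nc = 1 := by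
  rw [Spol, Fser, Polynomial.coe_mul]
  calc ((((Polynomial.X - Polynomial.C (b - a)) ^ (nb + 1) : Polynomial ℂ) : PowerSeries ℂ) *
        (((Polynomial.X - Polynomial.C (c - a)) ^ (nc + 1) : Polynomial ℂ) : PowerSeries ℂ)) *
        (Hs (b - a) nb * Hs (c - a) nc)
      = ((((Polynomial.X - Polynomial.C (b - a)) ^ (nb + 1) : Polynomial ℂ) : PowerSeries ℂ) *
          Hs (b - a) nb) *
        ((((Polynomial.X - Polynomial.C (c - a)) ^ (nc + 1) : Polynomial ℂ) : PowerSeries ℂ) *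
          Hs (c - a) nc) := by ring
    _ = 1 := by
        rw [coe_X_sub_C_pow_mul_Hs (sub_ne_zero.mpr hb) nb,
          coe_X_sub_C_pow_mul_Hs (sub_ne_zero.mpr hc) nc, mul_one]

lemma point_dvd (a b c : ℂ) (hb : b ≠ a) (hc : c ≠ a) (na nb nc : ℕ) :
    (Polynomial.X - Polynomial.C a) ^ (na + 1) ∣ (1 - Ppol a b c na nb nc * Spol b c nb nc) := by
  apply dvd_comp_shift
  have hcomp : (1 - Ppol a b c na nb nc * Spol b c nb nc).comp (Polynomial.X + Polynomial.C a)
      = 1 - (PowerSeries.trunc (na + 1) (Fser a b c nb nc)) * Spol (b - a) (c - a) nb nc := by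
    rw [Polynomial.sub_comp, Polynomial.one_comp, Polynomial.mul_comp]
    congr 1
    congr 1
    · have hXa : (Polynomial.X - Polynomial.C a).comp (Polynomial.X + Polynomial.C a)
          = (Polynomial.X : Polynomial ℂ) := by
        rw [Polynomial.sub_comp, Polynomial.X_comp, Polynomial.C_comp]; ring
      rw [Ppol, Polynomial.comp_assoc, hXa, Polynomial.comp_X]
    · simp only [Spol, Polynomial.mul_comp, Polynomial.pow_comp, Polynomial.sub_comp,
        Polynomial.X_comp, Polynomial.C_comp, map_sub]
      ring
  rw [hcomp]
  apply poly_dvd_of_coe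
  have hS := coe_Spol_mul_Fser a b c hb hc nb nc
  have key : ((1 - (PowerSeries.trunc (na + 1) (Fser a b c nb nc)) *
        Spol (b - a) (c - a) nb nc : Polynomial ℂ) : PowerSeries ℂ)
      = (Fser a b c nb nc -
          ((PowerSeries.trunc (na + 1) (Fser a b c nb nc) : Polynomial ℂ) : PowerSeries ℂ)) *
        ((Spol (b - a) (c - a) nb nc : Polynomial ℂ) : PowerSeries ℂ) := by
    rw [sub_mul]
    rw [mul_comm (Fser a b c nb nc), hS]
    push_cast [Polynomial.coe_sub, Polynomial.coe_mul, Polynomial.coe_one]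
    ring
  rw [key]
  apply Dvd.dvd.mul_right
  rw [PowerSeries.X_pow_dvd_iff]
  intro d hd
  rw [map_sub, Polynomial.coeff_coe, PowerSeries.coeff_trunc, if_pos hd, sub_self]

lemma natDegree_Ppol_le (a b c : ℂ) (na nb nc : ℕ) : (Ppol a b c na nb nc).natDegree ≤ na := by
  refine le_trans Polynomial.natDegree_comp_le ?_
  rw [natDegree_X_sub_C, mul_one]
  exact Nat.lt_succ_iff.mp (PowerSeries.natDegree_trunc_lt _ _)

lemma monic_Spol (b c : ℂ) (nb nc : ℕ) : (Spol b c nb nc).Monic :=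
  ((monic_X_sub_C b).pow _).mul ((monic_X_sub_C c).pow _)

lemma natDegree_Spol (b c : ℂ) (nb nc : ℕ) : (Spol b c nb nc).natDegree = nb + nc + 2 := by
  rw [Spol, ((monic_X_sub_C b).pow _).natDegree_mul ((monic_X_sub_C c).pow _),
    natDegree_pow, natDegree_pow, natDegree_X_sub_C, natDegree_X_sub_C]
  ring

lemma coeff_Ppol_top (a b c : ℂ) (na nb nc : ℕ) :
    (Ppol a b c na nb nc).coeff na = PowerSeries.coeff na (Fser a b c nb nc) := by
  rw [Ppol, coeff_comp_top (Nat.lt_succ_iff.mp (PowerSeries.natDegree_trunc_lt _ _))]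
  rw [PowerSeries.coeff_trunc, if_pos (Nat.lt_succ_self na)]

lemma coprime_pow_X_sub_C {a b : ℂ} (hab : a ≠ b) (na nb : ℕ) :
    IsCoprime ((Polynomial.X - Polynomial.C a) ^ na) ((Polynomial.X - Polynomial.C b) ^ nb) :=
  (Polynomial.isCoprime_X_sub_C_of_isUnit_sub (sub_ne_zero.mpr hab).isUnit).pow

lemma residue_sum (a b c : ℂ) (hab : a ≠ b) (hac : a ≠ c) (hbc : b ≠ c) (na nb nc : ℕ) :
    PowerSeries.coeff na (Fser a b c nb nc)
    + PowerSeries.coeff nb (Fser b a c na nc)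
    + PowerSeries.coeff nc (Fser c a b na nb) = 0 := by
  set Pa := Ppol a b c na nb nc with hPa
  set Sa := Spol b c nb nc with hSa
  set Pb := Ppol b a c nb na nc with hPb
  set Sb := Spol a c na nc with hSb
  set Pc := Ppol c a b nc na nb with hPc
  set Sc := Spol a b na nb with hSc
  set D : Polynomial ℂ := 1 - Pa * Sa - Pb * Sb - Pc * Sc with hD
  have dvd_a : (Polynomial.X - Polynomial.C a) ^ (na + 1) ∣ D := by
    have h1 := point_dvd a b c hab.symm hac.symm na nb nc
    have h2 : (Polynomial.X - Polynomial.C a) ^ (na + 1) ∣ Pb * Sb :=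
      Dvd.dvd.mul_left (Dvd.intro _ rfl) Pb
    have h3 : (Polynomial.X - Polynomial.C a) ^ (na + 1) ∣ Pc * Sc :=
      Dvd.dvd.mul_left (Dvd.intro _ rfl) Pc
    exact dvd_sub (dvd_sub h1 h2) h3
  have dvd_b : (Polynomial.X - Polynomial.C b) ^ (nb + 1) ∣ D := by
    have h1 := point_dvd b a c hab hbc.symm nb na nc
    have h2 : (Polynomial.X - Polynomial.C b) ^ (nb + 1) ∣ Pa * Sa :=
      Dvd.dvd.mul_left (Dvd.intro _ rfl) Pa
    have h3 : (Polynomial.X - Polynomial.C b) ^ (nb + 1) ∣ Pc * Sc :=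
      Dvd.dvd.mul_left (Dvd.intro_left _ rfl) Pc
    have hd : D = (1 - Pb * Sb) - Pa * Sa - Pc * Sc := by ring
    rw [hd]
    exact dvd_sub (dvd_sub h1 h2) h3
  have dvd_c : (Polynomial.X - Polynomial.C c) ^ (nc + 1) ∣ D := by
    have h1 := point_dvd c a b hac hbc nc na nb
    have h2 : (Polynomial.X - Polynomial.C c) ^ (nc + 1) ∣ Pa * Sa :=
      Dvd.dvd.mul_left (Dvd.intro_left _ rfl) Pa
    have h3 : (Polynomial.X - Polynomial.C c) ^ (nc + 1) ∣ Pb * Sb :=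
      Dvd.dvd.mul_left (Dvd.intro_left _ rfl) Pb
    have hd : D = (1 - Pc * Sc) - Pa * Sa - Pb * Sb := by ring
    rw [hd]
    exact dvd_sub (dvd_sub h1 h2) h3
  have prod_dvd : ((Polynomial.X - Polynomial.C a) ^ (na + 1) *
      ((Polynomial.X - Polynomial.C b) ^ (nb + 1) * (Polynomial.X - Polynomial.C c) ^ (nc + 1)))
      ∣ D := by
    refine IsCoprime.mul_dvd ?_ dvd_a (IsCoprime.mul_dvd (coprime_pow_X_sub_C hbc _ _) dvd_b dvd_c)
    exact (coprime_pow_X_sub_C hab _ _).mul_right (coprime_pow_X_sub_C hac _ _)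
  have hdeg_term : ∀ (P S : Polynomial ℂ) (dp ds : ℕ), P.natDegree ≤ dp → S.natDegree = ds →
      (P * S).natDegree ≤ dp + ds := by
    intro P S dp ds h1 h2
    refine le_trans (Polynomial.natDegree_mul_le) (by omega)
  have hDdeg : D.natDegree ≤ na + nb + nc + 2 := by
    have ha' : (Pa * Sa).natDegree ≤ na + nb + nc + 2 := by
      refine le_trans Polynomial.natDegree_mul_le ?_
      have h1 : Pa.natDegree ≤ na := natDegree_Ppol_le a b c na nb nc
      have h2 : Sa.natDegree = nb + nc + 2 := natDegree_Spol b c nb nc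
      omega
    have hb' : (Pb * Sb).natDegree ≤ na + nb + nc + 2 := by
      refine le_trans Polynomial.natDegree_mul_le ?_
      have h1 : Pb.natDegree ≤ nb := natDegree_Ppol_le b a c nb na nc
      have h2 : Sb.natDegree = na + nc + 2 := natDegree_Spol a c na nc
      omega
    have hc' : (Pc * Sc).natDegree ≤ na + nb + nc + 2 := by
      refine le_trans Polynomial.natDegree_mul_le ?_
      have h1 : Pc.natDegree ≤ nc := natDegree_Ppol_le c a b nc na nb
      have h2 : Sc.natDegree = na + nb + 2 := natDegree_Spol a b na nb
      omega
    refine le_trans (Polynomial.natDegree_sub_le _ _) (max_le ?_ hc')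
    refine le_trans (Polynomial.natDegree_sub_le _ _) (max_le ?_ hb')
    refine le_trans (Polynomial.natDegree_sub_le _ _) (max_le ?_ ha')
    simp
  have hD0 : D = 0 := by
    by_contra h0
    have hle := Polynomial.natDegree_le_of_dvd prod_dvd h0
    have hprod : ((Polynomial.X - Polynomial.C a) ^ (na + 1) *
        ((Polynomial.X - Polynomial.C b) ^ (nb + 1) *
        (Polynomial.X - Polynomial.C c) ^ (nc + 1))).natDegree = na + nb + nc + 3 := by
      rw [((monic_X_sub_C a).pow _).natDegree_mul
        (((monic_X_sub_C b).pow _).mul ((monic_X_sub_C c).pow _)),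
        ((monic_X_sub_C b).pow _).natDegree_mul ((monic_X_sub_C c).pow _),
        natDegree_pow, natDegree_pow, natDegree_pow, natDegree_X_sub_C, natDegree_X_sub_C,
        natDegree_X_sub_C]
      ring
    rw [hprod] at hle
    omega
  have heq : Pa * Sa + Pb * Sb + Pc * Sc = 1 := by
    have h := hD0
    rw [hD] at h
    linear_combination -h
  have hcoeff := congrArg (fun p : Polynomial ℂ => p.coeff (na + nb + nc + 2)) heq
  simp only [Polynomial.coeff_add] at hcoeff
  have hSa_top : Sa.coeff (nb + nc + 2) = 1 := by
    have := (monic_Spol b c nb nc).coeff_natDegree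
    rwa [natDegree_Spol] at this
  have hSb_top : Sb.coeff (na + nc + 2) = 1 := by
    have := (monic_Spol a c na nc).coeff_natDegree
    rwa [natDegree_Spol] at this
  have hSc_top : Sc.coeff (na + nb + 2) = 1 := by
    have := (monic_Spol a b na nb).coeff_natDegree
    rwa [natDegree_Spol] at this
  have ca : (Pa * Sa).coeff (na + nb + nc + 2) = PowerSeries.coeff na (Fser a b c nb nc) := by
    rw [show na + nb + nc + 2 = na + (nb + nc + 2) by ring,
      coeff_mul_top (natDegree_Ppol_le a b c na nb nc) (le_of_eq (natDegree_Spol b c nb nc)),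
      hSa_top, mul_one, coeff_Ppol_top]
  have cb : (Pb * Sb).coeff (na + nb + nc + 2) = PowerSeries.coeff nb (Fser b a c na nc) := by
    rw [show na + nb + nc + 2 = nb + (na + nc + 2) by ring,
      coeff_mul_top (natDegree_Ppol_le b a c nb na nc) (le_of_eq (natDegree_Spol a c na nc)),
      hSb_top, mul_one, coeff_Ppol_top]
  have cc : (Pc * Sc).coeff (na + nb + nc + 2) = PowerSeries.coeff nc (Fser c a b na nb) := by
    rw [show na + nb + nc + 2 = nc + (na + nb + 2) by ring,
      coeff_mul_top (natDegree_Ppol_le c a b nc na nb) (le_of_eq (natDegree_Spol a b na nb)),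
      hSc_top, mul_one, coeff_Ppol_top]
  rw [ca, cb, cc, Polynomial.coeff_one, if_neg (by omega)] at hcoeff
  exact hcoeff

lemma coeff_Hs_one (d i : ℕ) :
    PowerSeries.coeff i (Hs 1 d) = (-1) ^ (d + 1) * ((d + i).choose i : ℂ) := by
  rw [coeff_Hs]; simp

lemma coeff_Hs_neg_one (d i : ℕ) :
    PowerSeries.coeff i (Hs (-1) d) = ((d + i).choose i : ℂ) * (-1) ^ i := by
  rw [coeff_Hs]; simp [inv_neg]

lemma key (n m l : ℕ) (z : ℂ) (hz0 : z ≠ 0) (hz1 : z ≠ 1) :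
    ∑ k ∈ Finset.range (m + 1), ((l + k).choose k : ℂ) * ((n + m - k).choose (m - k) : ℂ)
        * (-1) ^ k * z ^ k * (1 - z) ^ (m - k)
    = (1 - z) ^ (m + l + 1) *
        ∑ j ∈ Finset.range (n + 1),
          ((l + j).choose j : ℂ) * ((m + n - j).choose (n - j) : ℂ) * z ^ j
      + (-1) ^ m * z ^ (n + m + 1) *
        ∑ i ∈ Finset.range (l + 1),
          ((n + i).choose i : ℂ) * ((m + l - i).choose (l - i) : ℂ) * (1 - z) ^ i := by
  have hu : (1 : ℂ) - z ≠ 0 := sub_ne_zero.mpr (Ne.symm hz1)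
  set u : ℂ := 1 - z with hu_def
  have R := residue_sum 0 1 z (by norm_num) (Ne.symm hz0) (Ne.symm hz1) n l m
  set W : ℂ := (-1) ^ (l + m) * z ^ (n + m + 1) * u ^ (m + l + 1) with hW
  have e1 : W * PowerSeries.coeff n (Fser 0 1 z l m)
      = u ^ (m + l + 1) *
        ∑ j ∈ Finset.range (n + 1),
          ((l + j).choose j : ℂ) * ((m + n - j).choose (n - j) : ℂ) * z ^ j := by
    rw [Fser, PowerSeries.coeff_mul, Finset.Nat.sum_antidiagonal_eq_sum_range_succ_mk,
      Finset.mul_sum, Finset.mul_sum]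
    dsimp only
    refine Finset.sum_congr rfl ?_
    intro i hi
    have hin : i ≤ n := Nat.lt_succ_iff.mp (Finset.mem_range.mp hi)
    rw [sub_zero, sub_zero, coeff_Hs_one, coeff_Hs]
    rw [show m + (n - i) = m + n - i by omega]
    rw [neg_pow z⁻¹]
    have hz : z ^ (n + m + 1) * ((z⁻¹) ^ (m + 1) * (z⁻¹) ^ (n - i)) = z ^ i := by
      rw [show n + m + 1 = i + (m + 1) + (n - i) by omega, pow_add, pow_add]
      field_simp
      rw [show z ^ (m + 1) * z ^ (n - i) * (1 / z) ^ (m + 1) * (1 / z) ^ (n - i) = (z * z⁻¹) ^ (m + 1) * (z * z⁻¹) ^ (n - i) by ring, mul_inv_cancel₀ hz0]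
      simp
    have hs : ((-1 : ℂ)) ^ (l + m) * ((-1) ^ (l + 1) * (-1) ^ (m + 1)) = 1 := by
      rw [← pow_add, ← pow_add, show l + m + (l + 1 + (m + 1)) = 2 * (l + m + 1) by ring,
        pow_mul]
      norm_num
    rw [hW]
    linear_combination (u ^ (m + l + 1) * ((l + i).choose i : ℂ) * ((m + n - i).choose (n - i) : ℂ)
        * (z ^ (n + m + 1) * ((z⁻¹) ^ (m + 1) * (z⁻¹) ^ (n - i)))) * hs
      + (u ^ (m + l + 1) * ((l + i).choose i : ℂ) * ((m + n - i).choose (n - i) : ℂ)) * hz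
  have e2 : W * PowerSeries.coeff l (Fser 1 0 z n m)
      = (-1) ^ m * z ^ (n + m + 1) *
        ∑ i ∈ Finset.range (l + 1),
          ((n + i).choose i : ℂ) * ((m + l - i).choose (l - i) : ℂ) * u ^ i := by
    rw [Fser, PowerSeries.coeff_mul, Finset.Nat.sum_antidiagonal_eq_sum_range_succ_mk,
      Finset.mul_sum, Finset.mul_sum]
    dsimp only
    refine Finset.sum_congr rfl ?_
    intro i hi
    have hil : i ≤ l := Nat.lt_succ_iff.mp (Finset.mem_range.mp hi)
    rw [show (0 : ℂ) - 1 = -1 by norm_num, coeff_Hs_neg_one, coeff_Hs]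
    rw [show m + (l - i) = m + l - i by omega]
    rw [show z - 1 = -u by rw [hu_def]; ring]
    simp only [inv_neg, neg_neg]
    rw [neg_pow u⁻¹]
    have hU : u ^ (m + l + 1) * ((u⁻¹) ^ (m + 1) * (u⁻¹) ^ (l - i)) = u ^ i := by
      rw [show m + l + 1 = i + (m + 1) + (l - i) by omega, pow_add, pow_add]
      field_simp
      rw [show u ^ (m + 1) * u ^ (l - i) * (1 / u) ^ (m + 1) * (1 / u) ^ (l - i) = (u * u⁻¹) ^ (m + 1) * (u * u⁻¹) ^ (l - i) by ring, mul_inv_cancel₀ hu]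
      simp
    have hs : ((-1 : ℂ)) ^ (l + m) * ((-1) ^ i * (-1) ^ (l - i)) = (-1 : ℂ) ^ m := by
      rw [← pow_add, ← pow_add, show l + m + (i + (l - i)) = 2 * l + m by omega, pow_add,
        pow_mul]
      norm_num
    rw [hW]
    linear_combination (z ^ (n + m + 1) * ((n + i).choose i : ℂ)
          * ((m + l - i).choose (l - i) : ℂ)
          * (u ^ (m + l + 1) * ((u⁻¹) ^ (m + 1) * (u⁻¹) ^ (l - i)))) * hs
      + (z ^ (n + m + 1) * ((n + i).choose i : ℂ) * ((m + l - i).choose (l - i) : ℂ)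
          * ((-1 : ℂ)) ^ m) * hU
  have e3 : W * PowerSeries.coeff m (Fser z 0 1 n l)
      = - ∑ k ∈ Finset.range (m + 1), ((l + k).choose k : ℂ) * ((n + m - k).choose (m - k) : ℂ)
        * (-1) ^ k * z ^ k * u ^ (m - k) := by
    have hrefl : ∑ k ∈ Finset.range (m + 1),
        ((l + k).choose k : ℂ) * ((n + m - k).choose (m - k) : ℂ)
          * (-1) ^ k * z ^ k * u ^ (m - k)
        = ∑ i ∈ Finset.range (m + 1),
        ((l + (m - i)).choose (m - i) : ℂ) * ((n + m - (m - i)).choose (m - (m - i)) : ℂ)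
          * (-1) ^ (m - i) * z ^ (m - i) * u ^ (m - (m - i)) := by
      rw [← Finset.sum_range_reflect]
      refine Finset.sum_congr rfl ?_
      intro i hi
      simp only [Nat.add_sub_cancel]
    rw [hrefl, Fser, PowerSeries.coeff_mul, Finset.Nat.sum_antidiagonal_eq_sum_range_succ_mk,
      Finset.mul_sum, ← Finset.sum_neg_distrib]
    dsimp only
    refine Finset.sum_congr rfl ?_
    intro i hi
    have him : i ≤ m := Nat.lt_succ_iff.mp (Finset.mem_range.mp hi)
    rw [zero_sub, show (1 : ℂ) - z = u from hu_def.symm, coeff_Hs, coeff_Hs]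
    rw [show m - (m - i) = i by omega, show n + m - (m - i) = n + i by omega]
    simp only [inv_neg, neg_neg]
    rw [neg_pow z⁻¹, neg_pow u⁻¹]
    have hz : z ^ (n + m + 1) * ((z⁻¹) ^ (n + 1) * (z⁻¹) ^ i) = z ^ (m - i) := by
      rw [show n + m + 1 = (m - i) + (n + 1) + i by omega, pow_add, pow_add]
      field_simp
      rw [show z ^ (n + 1) * z ^ i * (1 / z) ^ (n + 1) * (1 / z) ^ i = (z * z⁻¹) ^ (n + 1) * (z * z⁻¹) ^ i by ring, mul_inv_cancel₀ hz0]
      simp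
    have hU : u ^ (m + l + 1) * ((u⁻¹) ^ (l + 1) * (u⁻¹) ^ (m - i)) = u ^ i := by
      rw [show m + l + 1 = i + (l + 1) + (m - i) by omega, pow_add, pow_add]
      field_simp
      rw [show u ^ (l + 1) * u ^ (m - i) * (1 / u) ^ (l + 1) * (1 / u) ^ (m - i) = (u * u⁻¹) ^ (l + 1) * (u * u⁻¹) ^ (m - i) by ring, mul_inv_cancel₀ hu]
      simp
    have hs : ((-1 : ℂ)) ^ (l + m) * ((-1) ^ i * (-1) ^ (l + 1))
        = -(-1 : ℂ) ^ (m - i) := by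
      rw [← pow_add, ← pow_add,
        show l + m + (i + (l + 1)) = 2 * (l + i) + (m - i + 1) by omega,
        pow_add, pow_mul]
      simp [pow_succ]
    rw [hW]
    linear_combination (((n + i).choose i : ℂ) * ((l + (m - i)).choose (m - i) : ℂ)
          * (z ^ (n + m + 1) * ((z⁻¹) ^ (n + 1) * (z⁻¹) ^ i))
          * (u ^ (m + l + 1) * ((u⁻¹) ^ (l + 1) * (u⁻¹) ^ (m - i)))) * hs
      - (((n + i).choose i : ℂ) * ((l + (m - i)).choose (m - i) : ℂ) * ((-1 : ℂ)) ^ (m - i)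
          * (u ^ (m + l + 1) * ((u⁻¹) ^ (l + 1) * (u⁻¹) ^ (m - i)))) * hz
      - (((n + i).choose i : ℂ) * ((l + (m - i)).choose (m - i) : ℂ) * ((-1 : ℂ)) ^ (m - i)
          * z ^ (m - i)) * hU
  linear_combination (-W) * R + e3 + e1 + e2

lemma poch_nat_add_one (L k : ℕ) :
    poch ((L : ℂ) + 1) k = ((L + k).factorial : ℂ) / (L.factorial : ℂ) := by
  have hL : (L.factorial : ℂ) ≠ 0 := Nat.cast_ne_zero.mpr (Nat.factorial_ne_zero L)
  induction k with
  | zero =>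
    simp only [poch, ascPochhammer_zero, Polynomial.eval_one, Nat.add_zero]
    exact (div_self hL).symm
  | succ k ih =>
    rw [poch, ascPochhammer_succ_eval, ← poch, ih]
    rw [show L + (k + 1) = (L + k) + 1 from by omega, Nat.factorial_succ]
    push_cast
    field_simp
    ring

lemma poch_neg_nat (N : ℕ) : ∀ k : ℕ, k ≤ N →
    poch (-(N : ℂ)) k = (-1) ^ k * ((N.factorial : ℂ) / ((N - k).factorial : ℂ)) := by
  intro k
  induction k with
  | zero =>
    intro _
    simp only [poch, ascPochhammer_zero, Polynomial.eval_one, Nat.sub_zero, pow_zero, one_mul]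
    exact (div_self (Nat.cast_ne_zero.mpr (Nat.factorial_ne_zero N))).symm
  | succ k ih =>
    intro h
    have hk : k ≤ N := Nat.le_of_succ_le h
    have h1 : (-(N : ℂ) + k) = -(((N - k : ℕ) : ℂ)) := by
      rw [Nat.cast_sub hk]; ring
    obtain ⟨j, hj⟩ : ∃ j, N - (k + 1) = j := ⟨_, rfl⟩
    rw [poch, ascPochhammer_succ_eval, ← poch, ih hk, h1,
      show N - k = j + 1 from by omega, Nat.factorial_succ, hj]
    have hf1 : ((j.factorial : ℕ) : ℂ) ≠ 0 := Nat.cast_ne_zero.mpr (Nat.factorial_ne_zero _)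
    have hf2 : ((j + 1 : ℕ) : ℂ) ≠ 0 := Nat.cast_ne_zero.mpr (Nat.succ_ne_zero _)
    push_cast at hf2 ⊢
    field_simp
    ring

lemma hyp_eval (N M L : ℕ) (w : ℂ) :
    hyp N ((L : ℂ) + 1) (-((N + M : ℕ) : ℂ)) w
      = ((N.factorial : ℂ) * (M.factorial : ℂ) / ((N + M).factorial : ℂ)) *
        ∑ k ∈ Finset.range (N + 1),
          ((L + k).choose k : ℂ) * ((N + M - k).choose (N - k) : ℂ) * w ^ k := by
  rw [hyp, Finset.mul_sum]
  refine Finset.sum_congr rfl ?_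
  intro k hk
  have hkN : k ≤ N := Nat.lt_succ_iff.mp (Finset.mem_range.mp hk)
  rw [poch_neg_nat N k hkN, poch_neg_nat (N + M) k (by omega), poch_nat_add_one]
  rw [Nat.cast_choose ℂ (show k ≤ L + k by omega),
    Nat.cast_choose ℂ (show N - k ≤ N + M - k by omega)]
  rw [show L + k - k = L by omega, show N + M - k - (N - k) = M by omega]
  have f1 : ((L + k).factorial : ℂ) ≠ 0 := Nat.cast_ne_zero.mpr (Nat.factorial_ne_zero _)
  have f2 : (L.factorial : ℂ) ≠ 0 := Nat.cast_ne_zero.mpr (Nat.factorial_ne_zero _)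
  have f3 : (N.factorial : ℂ) ≠ 0 := Nat.cast_ne_zero.mpr (Nat.factorial_ne_zero _)
  have f4 : (M.factorial : ℂ) ≠ 0 := Nat.cast_ne_zero.mpr (Nat.factorial_ne_zero _)
  have f5 : ((N + M).factorial : ℂ) ≠ 0 := Nat.cast_ne_zero.mpr (Nat.factorial_ne_zero _)
  have f6 : ((N - k).factorial : ℂ) ≠ 0 := Nat.cast_ne_zero.mpr (Nat.factorial_ne_zero _)
  have f7 : ((N + M - k).factorial : ℂ) ≠ 0 := Nat.cast_ne_zero.mpr (Nat.factorial_ne_zero _)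
  have f8 : (k.factorial : ℂ) ≠ 0 := Nat.cast_ne_zero.mpr (Nat.factorial_ne_zero _)
  have f9 : ((-1 : ℂ)) ^ k ≠ 0 := pow_ne_zero _ (by norm_num)
  field_simp

end TMC

theorem trivial_monodromy_connection (n m l : ℕ) (z : ℂ) (hz0 : z ≠ 0) (hz1 : z ≠ 1) :
    (1 - z) ^ (-(l : ℤ) - 1) * hyp m ((l : ℂ) + 1) (-(n : ℂ) - m) (z / (z - 1)) =
      hyp n ((l : ℂ) + 1) (-(n : ℂ) - m) z +
      (-1) ^ m * ((Nat.factorial n : ℂ) * (Nat.factorial (m + l) : ℂ) /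
          ((Nat.factorial l : ℂ) * (Nat.factorial (n + m) : ℂ))) *
        (z ^ (n + m + 1) * (1 - z) ^ (-(m : ℤ) - l - 1)) *
        hyp l ((n : ℂ) + 1) (-(m : ℂ) - l) (1 - z) := by
  have hu : (1 : ℂ) - z ≠ 0 := sub_ne_zero.mpr (Ne.symm hz1)
  have hA : hyp m ((l : ℂ) + 1) (-(n : ℂ) - m) (z / (z - 1))
      = ((m.factorial : ℂ) * (n.factorial : ℂ) / ((n + m).factorial : ℂ)) *
        ∑ k ∈ Finset.range (m + 1),
          ((l + k).choose k : ℂ) * ((n + m - k).choose (m - k) : ℂ) * (z / (z - 1)) ^ k := by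
    rw [show -(n : ℂ) - m = -(((m + n : ℕ)) : ℂ) by push_cast; ring]
    have h := TMC.hyp_eval m n l (z / (z - 1))
    simpa only [show m + n = n + m from Nat.add_comm m n] using h
  have hB : hyp n ((l : ℂ) + 1) (-(n : ℂ) - m) z
      = ((n.factorial : ℂ) * (m.factorial : ℂ) / ((n + m).factorial : ℂ)) *
        ∑ j ∈ Finset.range (n + 1),
          ((l + j).choose j : ℂ) * ((n + m - j).choose (n - j) : ℂ) * z ^ j := by
    rw [show -(n : ℂ) - m = -(((n + m : ℕ)) : ℂ) by push_cast; ring]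
    exact TMC.hyp_eval n m l z
  have hC : hyp l ((n : ℂ) + 1) (-(m : ℂ) - l) (1 - z)
      = ((l.factorial : ℂ) * (m.factorial : ℂ) / ((m + l).factorial : ℂ)) *
        ∑ i ∈ Finset.range (l + 1),
          ((n + i).choose i : ℂ) * ((m + l - i).choose (l - i) : ℂ) * (1 - z) ^ i := by
    rw [show -(m : ℂ) - l = -(((l + m : ℕ)) : ℂ) by push_cast; ring]
    have h := TMC.hyp_eval l m n (1 - z)
    simpa only [show l + m = m + l from Nat.add_comm l m] using h
  have K := TMC.key n m l z hz0 hz1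
  simp only [show m + n = n + m from Nat.add_comm m n] at K
  have hconv : (1 - z) ^ m *
      (∑ k ∈ Finset.range (m + 1),
        ((l + k).choose k : ℂ) * ((n + m - k).choose (m - k) : ℂ) * (z / (z - 1)) ^ k)
      = ∑ k ∈ Finset.range (m + 1),
        ((l + k).choose k : ℂ) * ((n + m - k).choose (m - k) : ℂ)
          * (-1) ^ k * z ^ k * (1 - z) ^ (m - k) := by
    rw [Finset.mul_sum]
    refine Finset.sum_congr rfl ?_
    intro k hk
    have hkm : k ≤ m := Nat.lt_succ_iff.mp (Finset.mem_range.mp hk)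
    rw [div_pow, show z - 1 = -(1 - z) by ring, neg_pow (1 - z)]
    rw [show (1 - z) ^ m = (1 - z) ^ (m - k) * (1 - z) ^ k from by rw [← pow_add]; congr 1; omega]
    rw [div_eq_mul_inv, mul_inv, ← inv_pow, inv_neg, inv_one]
    have hcc : (1 - z) ^ k * ((1 - z) ^ k)⁻¹ = 1 := mul_inv_cancel₀ (pow_ne_zero _ hu)
    linear_combination ((1 - z) ^ (m - k) * ((l + k).choose k : ℂ)
      * ((n + m - k).choose (m - k) : ℂ) * z ^ k * ((-1 : ℂ)) ^ k) * hcc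
  have hzp1 : (1 - z) ^ (-(l : ℤ) - 1) = (((1 - z) ^ (l + 1) : ℂ))⁻¹ := by
    rw [show -(l : ℤ) - 1 = -((l + 1 : ℕ) : ℤ) by push_cast; ring, zpow_neg, zpow_natCast]
  have hzp2 : (1 - z) ^ (-(m : ℤ) - l - 1) = (((1 - z) ^ (m + l + 1) : ℂ))⁻¹ := by
    rw [show -(m : ℤ) - l - 1 = -((m + l + 1 : ℕ) : ℤ) by push_cast; ring, zpow_neg, zpow_natCast]
  rw [hzp1, hzp2, hA, hB, hC]
  rw [← hconv] at K
  have fl : (l.factorial : ℂ) ≠ 0 := Nat.cast_ne_zero.mpr (Nat.factorial_ne_zero _)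
  have fm : (m.factorial : ℂ) ≠ 0 := Nat.cast_ne_zero.mpr (Nat.factorial_ne_zero _)
  have fn : (n.factorial : ℂ) ≠ 0 := Nat.cast_ne_zero.mpr (Nat.factorial_ne_zero _)
  have fnm : ((n + m).factorial : ℂ) ≠ 0 := Nat.cast_ne_zero.mpr (Nat.factorial_ne_zero _)
  have fml : ((m + l).factorial : ℂ) ≠ 0 := Nat.cast_ne_zero.mpr (Nat.factorial_ne_zero _)
  have hup : ∀ k : ℕ, (1 - z) ^ k ≠ 0 := fun k => pow_ne_zero _ hu
  set SAp := ∑ k ∈ Finset.range (m + 1),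
      ((l + k).choose k : ℂ) * ((n + m - k).choose (m - k) : ℂ) * (z / (z - 1)) ^ k with hSAp
  set SB := ∑ j ∈ Finset.range (n + 1),
      ((l + j).choose j : ℂ) * ((n + m - j).choose (n - j) : ℂ) * z ^ j with hSB
  set SC := ∑ i ∈ Finset.range (l + 1),
      ((n + i).choose i : ℂ) * ((m + l - i).choose (l - i) : ℂ) * (1 - z) ^ i with hSC
  field_simp
  have hden : ((((n + m).factorial : ℂ)) * ((l.factorial : ℂ) * ((n + m).factorial : ℂ) *
      (1 - z) ^ (m + l + 1) * ((m + l).factorial : ℂ))) ≠ 0 := by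
    exact mul_ne_zero fnm (mul_ne_zero (mul_ne_zero (mul_ne_zero fl fnm) (hup _)) fml)
  linear_combination (1 - z) ^ (l + 1) * K
end

section
/- Let n, m, ℓ be nonnegative integers. Then the terminating series satisfies 2F1(-n, ℓ+1; -n-m; z) = (m!(n+ℓ)!/(ℓ!(n+m)!)) · z^n · 2F1(-n, m+1; -n-ℓ; 1/z), for z ≠ 0. -/
open Finset

lemma poch_cast_succ (l k : ℕ) :
    poch ((l:ℂ)+1) k = (Nat.factorial (l+k) : ℂ) / (Nat.factorial l : ℂ) := by
  induction k with
  | zero => simp [poch, div_self (Nat.cast_ne_zero.mpr (Nat.factorial_ne_zero _) : (Nat.factorial _ : ℂ) ≠ 0)]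
  | succ k ih =>
    rw [poch_succ, ih, show l + (k+1) = (l+k)+1 from by ring, Nat.factorial_succ]
    have h1 : (Nat.factorial l : ℂ) ≠ 0 := Nat.cast_ne_zero.mpr (Nat.factorial_ne_zero _)
    push_cast
    field_simp
    ring

lemma poch_neg (n k : ℕ) (h : k ≤ n) :
    poch (-(n:ℂ)) k = (-1)^k * (Nat.factorial n : ℂ) / (Nat.factorial (n-k) : ℂ) := by
  induction k with
  | zero => simp [poch, div_self (Nat.cast_ne_zero.mpr (Nat.factorial_ne_zero _) : (Nat.factorial _ : ℂ) ≠ 0)]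
  | succ k ih =>
    obtain ⟨a, rfl⟩ : ∃ a, n = a + (k+1) := ⟨n-(k+1), by omega⟩
    rw [poch_succ, ih (by omega)]
    rw [show a + (k+1) - k = a + 1 from by omega, show a + (k+1) - (k+1) = a from by omega,
      Nat.factorial_succ]
    have h1 : (Nat.factorial a : ℂ) ≠ 0 := Nat.cast_ne_zero.mpr (Nat.factorial_ne_zero _)
    have h2 : ((a:ℂ) + 1) ≠ 0 := by
      have : ((a+1 : ℕ) : ℂ) ≠ 0 := Nat.cast_ne_zero.mpr (by omega)
      push_cast at this; exact this
    push_cast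
    field_simp
    ring

set_option maxHeartbeats 1000000 in
theorem rational_solution_transform_at_infinity (n m l : ℕ) (z : ℂ) (hz : z ≠ 0) :
    hyp n ((l : ℂ) + 1) (-(n : ℂ) - m) z =
      (Nat.factorial m : ℂ) * (Nat.factorial (n + l) : ℂ) /
          ((Nat.factorial l : ℂ) * (Nat.factorial (n + m) : ℂ)) *
        z ^ n * hyp n ((m : ℂ) + 1) (-(n : ℂ) - l) (1 / z) := by
  unfold hyp
  rw [Finset.mul_sum, ← Finset.sum_range_reflect]
  refine Finset.sum_congr rfl ?_
  intro j hj
  have hj' : j ≤ n := Nat.lt_succ_iff.mp (Finset.mem_range.mp hj)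
  have hnm : (-(n:ℂ) - m) = -((n+m : ℕ) : ℂ) := by push_cast; ring
  have hnl : (-(n:ℂ) - l) = -((n+l : ℕ) : ℂ) := by push_cast; ring
  rw [show n + 1 - 1 - j = n - j from by omega]
  rw [poch_neg n (n-j) (by omega), poch_cast_succ l (n-j),
    hnm, poch_neg (n+m) (n-j) (by omega),
    poch_neg n j hj', poch_cast_succ m j,
    hnl, poch_neg (n+l) j (by omega)]
  rw [show n - (n - j) = j from by omega, show n + m - (n - j) = m + j from by omega,
    show l + (n - j) = n + l - j from by omega, show n + l - j = l + (n-j) from by omega,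
    show m + j = n + m - (n - j) from by omega]
  have hzj : z ^ j ≠ 0 := pow_ne_zero _ hz
  have hzn : z ^ (n - j) = z ^ n / z ^ j := pow_sub₀ z hz hj'
  rw [hzn, one_div, inv_pow]
  have f1 : (Nat.factorial l : ℂ) ≠ 0 := Nat.cast_ne_zero.mpr (Nat.factorial_ne_zero _)
  have f2 : (Nat.factorial m : ℂ) ≠ 0 := Nat.cast_ne_zero.mpr (Nat.factorial_ne_zero _)
  have f3 : (Nat.factorial j : ℂ) ≠ 0 := Nat.cast_ne_zero.mpr (Nat.factorial_ne_zero _)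
  have f4 : (Nat.factorial (n-j) : ℂ) ≠ 0 := Nat.cast_ne_zero.mpr (Nat.factorial_ne_zero _)
  have f5 : (Nat.factorial (n+m) : ℂ) ≠ 0 := Nat.cast_ne_zero.mpr (Nat.factorial_ne_zero _)
  have f6 : (Nat.factorial (n+l) : ℂ) ≠ 0 := Nat.cast_ne_zero.mpr (Nat.factorial_ne_zero _)
  have f7 : (Nat.factorial (n+m-(n-j)) : ℂ) ≠ 0 := Nat.cast_ne_zero.mpr (Nat.factorial_ne_zero _)
  have f8 : (Nat.factorial (l+(n-j)) : ℂ) ≠ 0 := Nat.cast_ne_zero.mpr (Nat.factorial_ne_zero _)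
  have s1 : ((-1 : ℂ))^(n-j) ≠ 0 := by simp
  have s2 : ((-1 : ℂ))^j ≠ 0 := by simp
  field_simp
end

section
/- Let n, m, ℓ be nonnegative integers. Then 2F1(-n, ℓ+1; -n-m; z) = (m!(n+m+ℓ+1)!/((n+m)!(m+ℓ+1)!)) · 2F1(-n, ℓ+1; 2+m+ℓ; 1-z), as polynomials in z. -/
open Finset

lemma castAsc (a k : ℕ) : ((a+1).ascFactorial k : ℂ) = (a+k).factorial / a.factorial := by
  rw [eq_div_iff (by exact_mod_cast a.factorial_ne_zero), ← Nat.cast_mul,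
    mul_comm, Nat.factorial_mul_ascFactorial]

lemma castDesc (n k : ℕ) (h : k ≤ n) : (n.descFactorial k : ℂ) = n.factorial / (n-k).factorial := by
  rw [eq_div_iff (by exact_mod_cast (n-k).factorial_ne_zero), ← Nat.cast_mul,
    mul_comm, Nat.factorial_mul_descFactorial h]

lemma castChoose (n k : ℕ) (h : k ≤ n) : (n.choose k : ℂ) = n.factorial / (k.factorial * (n-k).factorial) := by
  rw [eq_div_iff (mul_ne_zero (by exact_mod_cast k.factorial_ne_zero)
    (by exact_mod_cast (n-k).factorial_ne_zero)), ← Nat.cast_mul, ← Nat.cast_mul]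
  norm_cast
  rw [← Nat.choose_mul_factorial_mul_factorial h, mul_assoc]

-- pascal-split helper
lemma keyaux (N : ℕ) (g : ℕ → ℂ) :
    ∑ i ∈ range (N+2), (-1:ℂ)^i * ((N+1).choose i) * g i =
      (∑ i ∈ range (N+1), (-1:ℂ)^i * (N.choose i) * g i)
      - ∑ i ∈ range (N+1), (-1:ℂ)^i * (N.choose i) * g (i+1) := by
  rw [Finset.sum_range_succ' (fun i => (-1:ℂ)^i * ((N+1).choose i) * g i)]
  have h1 : ∀ i, ((N+1).choose (i+1) : ℂ) = (N.choose i : ℂ) + (N.choose (i+1) : ℂ) := by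
    intro i; rw [Nat.choose_succ_succ]; push_cast; ring
  have h2 : (∑ i ∈ range (N+1), (-1:ℂ)^(i+1) * ((N+1).choose (i+1)) * g (i+1))
      = (∑ i ∈ range (N+1), -((-1:ℂ)^i * (N.choose i) * g (i+1)))
        + ∑ i ∈ range (N+1), (-1:ℂ)^(i+1) * (N.choose (i+1)) * g (i+1) := by
    rw [← Finset.sum_add_distrib]
    refine Finset.sum_congr rfl fun i _ => ?_
    rw [h1]; ring
  have h3 : (∑ i ∈ range (N+1), (-1:ℂ)^(i+1) * (N.choose (i+1)) * g (i+1))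
      = (∑ i ∈ range (N+2), (-1:ℂ)^i * (N.choose i) * g i) - (-1:ℂ)^0 * (N.choose 0) * g 0 := by
    rw [Finset.sum_range_succ' (fun i => (-1:ℂ)^i * (N.choose i) * g i)]
    ring
  have h4 : (∑ i ∈ range (N+2), (-1:ℂ)^i * (N.choose i) * g i)
      = ∑ i ∈ range (N+1), (-1:ℂ)^i * (N.choose i) * g i := by
    rw [Finset.sum_range_succ]; simp [Nat.choose_succ_self]
  rw [h2, h3, h4, Finset.sum_neg_distrib]
  simp
  ring

lemma key_s14 (m : ℕ) : ∀ (N A : ℕ),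
    ∑ i ∈ range (N+1), (-1:ℂ)^i * (N.choose i) *
        ((A+i).factorial / ((A+m+1+i).factorial)) =
      (A.factorial : ℂ) * (N+m).factorial / (m.factorial * (N+A+m+1).factorial) := by
  intro N
  induction N with
  | zero =>
    intro A
    simp only [zero_add, Finset.sum_range_one, pow_zero, Nat.choose_self]
    rw [show A+0 = A from rfl, show A+m+1+0 = A+m+1 from rfl,
      mul_comm (A.factorial : ℂ) (m.factorial : ℂ), mul_div_mul_left _ _
        (show ((m.factorial:ℕ):ℂ) ≠ 0 by exact_mod_cast m.factorial_ne_zero)]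
    simp
  | succ N ih =>
    intro A
    rw [keyaux N (fun i => ((A+i).factorial : ℂ) / ((A+m+1+i).factorial))]
    have e1 : (∑ i ∈ range (N+1), (-1:ℂ)^i * (N.choose i) *
        ((A+(i+1)).factorial / ((A+m+1+(i+1)).factorial)))
        = ∑ i ∈ range (N+1), (-1:ℂ)^i * (N.choose i) *
        (((A+1)+i).factorial / (((A+1)+m+1+i).factorial)) := by
      refine Finset.sum_congr rfl fun i _ => ?_
      rw [show A+(i+1) = (A+1)+i by ring, show A+m+1+(i+1) = (A+1)+m+1+i by ring]
    rw [e1, ih A, ih (A+1)]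
    have hA : ((A+1).factorial : ℂ) = (A+1) * A.factorial := by
      rw [Nat.factorial_succ]; push_cast; ring
    have hNm : ((N+1+m).factorial : ℂ) = (N+m+1) * (N+m).factorial := by
      rw [show N+1+m = (N+m)+1 by ring, Nat.factorial_succ]; push_cast; ring
    have hbig : ((N+(A+1)+m+1).factorial : ℂ) = (N+A+m+2) * (N+A+m+1).factorial := by
      rw [show N+(A+1)+m+1 = (N+A+m+1)+1 by ring, Nat.factorial_succ]; push_cast; ring
    have hbig2 : ((N+1+A+m+1).factorial : ℂ) = (N+A+m+2) * (N+A+m+1).factorial := by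
      rw [show N+1+A+m+1 = (N+A+m+1)+1 by ring, Nat.factorial_succ]; push_cast; ring
    rw [hA, hNm, hbig, hbig2]
    have f1 : ((m.factorial : ℂ)) ≠ 0 := by exact_mod_cast m.factorial_ne_zero
    have f2 : (((N+A+m+1).factorial : ℂ)) ≠ 0 := by exact_mod_cast (N+A+m+1).factorial_ne_zero
    have f3 : ((N:ℂ)+A+m+2) ≠ 0 := by
      have h : ((N+A+m+2 : ℕ) : ℂ) ≠ 0 := Nat.cast_ne_zero.mpr (by omega)
      push_cast at h
      exact h
    field_simp
    ring

lemma cancel7 (x a b c d e f g : ℂ) (ha : a ≠ 0) (hb : b ≠ 0) (hc : c ≠ 0) (hd : d ≠ 0)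
    (he : e ≠ 0) (hf : f ≠ 0) (hg : g ≠ 0) :
    x * a * b * c * d * e * f * g * a⁻¹ * b⁻¹ * c⁻¹ * d⁻¹ * e⁻¹ * f⁻¹ * g⁻¹ = x := by
  have h : a * b * c * d * e * f * g ≠ 0 := by
    simp [ha, hb, hc, hd, he, hf, hg]
  field_simp

lemma hfac : ∀ x : ℕ, ((x.factorial : ℕ):ℂ) ≠ 0 := fun x => Nat.cast_ne_zero.mpr x.factorial_ne_zero

set_option maxHeartbeats 4000000 in
lemma coeff (n m l j : ℕ) (hj : j ≤ n) :
    ((n.descFactorial j : ℂ) * ((l+1).ascFactorial j)) /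
        (((n+m).descFactorial j) * j.factorial)
      = ((m.factorial : ℂ) * (n+m+l+1).factorial / ((n+m).factorial * (m+l+1).factorial)) *
        ∑ i ∈ range (n-j+1),
          ((-1:ℂ)^(j+i) * (n.descFactorial (j+i)) * ((l+1).ascFactorial (j+i)) /
              (((m+l+2).ascFactorial (j+i)) * (j+i).factorial)) * ((j+i).choose j) * (-1:ℂ)^j := by
  have hsum : (∑ i ∈ range (n-j+1),
          ((-1:ℂ)^(j+i) * (n.descFactorial (j+i)) * ((l+1).ascFactorial (j+i)) /
              (((m+l+2).ascFactorial (j+i)) * (j+i).factorial)) * ((j+i).choose j) * (-1:ℂ)^j)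
      = ((n.factorial : ℂ) * (m+l+1).factorial / ((n-j).factorial * j.factorial * l.factorial)) *
        ∑ i ∈ range (n-j+1), (-1:ℂ)^i * ((n-j).choose i) *
          (((l+j)+i).factorial / (((l+j)+m+1+i).factorial)) := by
    rw [Finset.mul_sum]
    refine Finset.sum_congr rfl fun i hi => ?_
    have hi' : i ≤ n - j := by simpa using Nat.lt_succ_iff.mp (Finset.mem_range.mp hi)
    have hji : j + i ≤ n := by omega
    rw [castDesc n (j+i) hji, castAsc l (j+i),
      show m+l+2 = (m+l+1)+1 from rfl, castAsc (m+l+1) (j+i),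
      castChoose (j+i) j (by omega), castChoose (n-j) i hi']
    rw [show j + i - j = i by omega, show n - (j+i) = n - j - i by omega]
    rw [show l + (j+i) = (l+j)+i by ring, show m+l+1+(j+i) = (l+j)+m+1+i by ring]
    field_simp [hfac]
    ring_nf
    rw [show ((-1:ℂ))^(j*2) = 1 by rw [mul_comm j 2, pow_mul]; norm_num]
    field_simp [hfac]
    rw [div_eq_div_iff (by simp [Nat.factorial_ne_zero]) (by simp [Nat.factorial_ne_zero])]
    ring
  rw [hsum, key_s14 m (n-j) (l+j)]
  rw [show (n-j) + (l+j) + m + 1 = n+m+l+1 by omega, show (n-j)+m = n+m-j by omega]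
  rw [castDesc n j hj, castAsc l j, castDesc (n+m) j (by omega)]
  have e1 := hfac m; have e2 := hfac l; have e3 := hfac j; have e4 := hfac (n+m)
  have e5 := hfac (n-j); have e6 := hfac (m+l+1); have e7 := hfac (n+m+l+1)
  have e8 := hfac (l+j); have e9 := hfac (n+m-j); have e10 := hfac n
  have e7' := hfac (1+l+n+m); have e6' := hfac (1+l+m)
  field_simp

lemma pochNeg (n k : ℕ) : poch (-(n:ℂ)) k = (-1:ℂ)^k * (n.descFactorial k : ℂ) := by
  rw [poch, ascPochhammer_eval_neg_eq_descPochhammer, descPochhammer_eval_eq_descFactorial]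

lemma pochNat (a k : ℕ) : poch ((a:ℂ)) k = (a.ascFactorial k : ℂ) := by
  rw [poch, Nat.cast_ascFactorial]

lemma pochL (l k : ℕ) : poch ((l:ℂ)+1) k = ((l+1).ascFactorial k : ℂ) := by
  rw [show ((l:ℂ)+1) = ((l+1 : ℕ) : ℂ) by push_cast; ring, pochNat]

lemma pochNegNM (n m k : ℕ) : poch (-(n:ℂ)-(m:ℂ)) k = (-1:ℂ)^k * ((n+m).descFactorial k : ℂ) := by
  rw [show (-(n:ℂ)-(m:ℂ)) = -(((n+m:ℕ)):ℂ) by push_cast; ring, pochNeg]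

lemma pochC (m l k : ℕ) : poch (2+(m:ℂ)+(l:ℂ)) k = ((m+l+2).ascFactorial k : ℂ) := by
  rw [show (2+(m:ℂ)+(l:ℂ)) = ((m+l+2 : ℕ) : ℂ) by push_cast; ring, pochNat]


theorem rational_solution_transform_at_one (n m l : ℕ) (z : ℂ) :
    hyp n ((l : ℂ) + 1) (-(n : ℂ) - m) z =
      (Nat.factorial m : ℂ) * (Nat.factorial (n + m + l + 1) : ℂ) /
          ((Nat.factorial (n + m) : ℂ) * (Nat.factorial (m + l + 1) : ℂ)) *
        hyp n ((l : ℂ) + 1) (2 + m + l) (1 - z) := by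
  rw [hyp, hyp]
  have hneg : ((-1:ℂ)) ≠ 0 := by norm_num
  have hL : ∀ k ∈ range (n+1),
      poch (-(n:ℂ)) k * poch ((l:ℂ)+1) k / (poch (-(n:ℂ)-m) k * (k.factorial : ℂ)) * z^k
      = ((n.descFactorial k : ℂ) * ((l+1).ascFactorial k)) /
          (((n+m).descFactorial k) * k.factorial) * z^k := by
    intro k hk
    rw [pochNeg, pochL, pochNegNM]
    rw [show ((-1:ℂ)^k * (n.descFactorial k : ℂ)) * ((l+1).ascFactorial k : ℂ)
        = (-1:ℂ)^k * ((n.descFactorial k : ℂ) * ((l+1).ascFactorial k)) by ring,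
      show ((-1:ℂ)^k * ((n+m).descFactorial k : ℂ)) * (k.factorial : ℂ)
        = (-1:ℂ)^k * (((n+m).descFactorial k : ℂ) * k.factorial) by ring,
      mul_div_mul_left _ _ (pow_ne_zero k hneg)]
  rw [Finset.sum_congr rfl hL]
  have hR : ∀ k ∈ range (n+1),
      poch (-(n:ℂ)) k * poch ((l:ℂ)+1) k / (poch (2+(m:ℂ)+l) k * (k.factorial : ℂ)) * (1-z)^k
      = ∑ j ∈ range (k+1),
          ((-1:ℂ)^k * (n.descFactorial k) * ((l+1).ascFactorial k) /
            (((m+l+2).ascFactorial k) * k.factorial)) * ((-z)^j * ((k.choose j : ℕ):ℂ)) := by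
    intro k hk
    rw [pochNeg, pochL, pochC, show (1-z : ℂ) = (-z)+1 by ring, add_pow, Finset.mul_sum]
    refine Finset.sum_congr rfl fun j hj => ?_
    simp only [one_pow]
    ring
  rw [Finset.sum_congr rfl hR]
  have hswap : (∑ k ∈ range (n+1), ∑ j ∈ range (k+1),
        ((-1:ℂ)^k * (n.descFactorial k) * ((l+1).ascFactorial k) /
            (((m+l+2).ascFactorial k) * k.factorial)) * ((-z)^j * ((k.choose j : ℕ):ℂ)))
      = ∑ j ∈ range (n+1), ∑ k ∈ Ico j (n+1),
        ((-1:ℂ)^k * (n.descFactorial k) * ((l+1).ascFactorial k) /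
            (((m+l+2).ascFactorial k) * k.factorial)) * ((-z)^j * ((k.choose j : ℕ):ℂ)) := by
    refine Finset.sum_comm' ?_
    intro x y
    simp only [mem_range, mem_Ico]
    omega
  rw [hswap, Finset.mul_sum]
  refine Finset.sum_congr rfl fun j hj => ?_
  have hj' : j ≤ n := by simpa using Nat.lt_succ_iff.mp (Finset.mem_range.mp hj)
  rw [Finset.sum_Ico_eq_sum_range, show n + 1 - j = n - j + 1 by omega]
  rw [coeff n m l j hj', mul_assoc]
  refine congrArg _ ?_
  rw [Finset.sum_mul]
  refine Finset.sum_congr rfl fun i hi => ?_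
  rw [neg_pow]
  ring
end

section
/- Let n, m, ℓ be nonnegative integers. Then 2F1(-ℓ, -n-ℓ; -m-n-2ℓ; z) = ((n+ℓ)!(n+m+ℓ)!/(n!(n+m+2ℓ)!)) · (-z)^ℓ · 2F1(-ℓ, n+m+ℓ+1; n+1; 1/z), for z ≠ 0. -/
set_option maxHeartbeats 1000000

open Finset

lemma poch_neg_mul (N : ℕ) : ∀ j, j ≤ N →
    (ascPochhammer ℂ j).eval (-(N : ℂ)) * ((N - j).factorial : ℂ)
      = (-1) ^ j * (N.factorial : ℂ) := by
  intro j
  induction j with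
  | zero => simp
  | succ j ih =>
    intro h
    have hj : j ≤ N := by omega
    rw [ascPochhammer_succ_eval]
    have key : -(N : ℂ) + j = -((N - j : ℕ) : ℂ) := by
      push_cast [Nat.cast_sub hj]; ring
    have hfac : ((N - j).factorial : ℂ)
        = ((N - j : ℕ) : ℂ) * ((N - (j+1)).factorial : ℂ) := by
      rw [show N - j = (N - (j+1)) + 1 by omega, Nat.factorial_succ]
      push_cast
      ring
    calc (ascPochhammer ℂ j).eval (-(N : ℂ)) * (-(N : ℂ) + j) * ((N - (j+1)).factorial : ℂ)
        = -((ascPochhammer ℂ j).eval (-(N : ℂ)) * (((N - j : ℕ) : ℂ) * ((N - (j+1)).factorial : ℂ))) := by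
          rw [key]; ring
      _ = -((ascPochhammer ℂ j).eval (-(N : ℂ)) * ((N - j).factorial : ℂ)) := by rw [hfac]
      _ = (-1) ^ (j+1) * (N.factorial : ℂ) := by rw [ih hj]; ring

lemma poch_neg_s16 (N j : ℕ) (h : j ≤ N) :
    (ascPochhammer ℂ j).eval (-(N : ℂ))
      = (-1) ^ j * (N.factorial : ℂ) / ((N - j).factorial : ℂ) := by
  rw [eq_div_iff (by exact_mod_cast (Nat.factorial_ne_zero _))]
  exact poch_neg_mul N j h

lemma poch_pos (N k : ℕ) :
    (ascPochhammer ℂ k).eval ((N : ℂ) + 1)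
      = (((N + k).factorial : ℕ) : ℂ) / (N.factorial : ℂ) := by
  rw [eq_div_iff (by exact_mod_cast (Nat.factorial_ne_zero _))]
  induction k with
  | zero => simp
  | succ k ih =>
    rw [ascPochhammer_succ_eval, show N + (k+1) = (N + k) + 1 by omega, Nat.factorial_succ]
    push_cast
    rw [mul_comm ((ascPochhammer ℂ k).eval _) _, mul_assoc, ih]
    ring

theorem additive_case_transform_at_infinity (n m l : ℕ) (z : ℂ) (hz : z ≠ 0) :
    hyp l (-(n : ℂ) - l) (-(m : ℂ) - n - 2 * l) z =
      (Nat.factorial (n + l) : ℂ) * (Nat.factorial (n + m + l) : ℂ) /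
          ((Nat.factorial n : ℂ) * (Nat.factorial (n + m + 2 * l) : ℂ)) *
        (-z) ^ l * hyp l ((n : ℂ) + m + l + 1) ((n : ℂ) + 1) (1 / z) := by
  unfold hyp poch
  rw [← Finset.sum_range_reflect, Finset.mul_sum]
  apply Finset.sum_congr rfl
  intro k hk
  have hk' : k ≤ l := Nat.lt_succ_iff.mp (Finset.mem_range.mp hk)
  simp only [Nat.add_sub_cancel]
  have e1 : -(l : ℂ) = -((l : ℕ) : ℂ) := by norm_num
  have e2 : -(n : ℂ) - l = -(((n + l : ℕ)) : ℂ) := by push_cast; ring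
  have e3 : -(m : ℂ) - n - 2 * l = -(((n + m + 2 * l : ℕ)) : ℂ) := by push_cast; ring
  have e4 : (n : ℂ) + m + l + 1 = (((n + m + l : ℕ)) : ℂ) + 1 := by push_cast; ring
  have e5 : (n : ℂ) + 1 = ((n : ℕ) : ℂ) + 1 := by norm_num
  rw [e2, e3, e4, e5]
  rw [poch_neg_s16 l (l - k) (by omega)]
  rw [poch_neg_s16 (n + l) (l - k) (by omega)]
  rw [poch_neg_s16 (n + m + 2 * l) (l - k) (by omega)]
  rw [poch_neg_s16 l k hk']
  rw [poch_pos (n + m + l) k, poch_pos n k]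
  rw [show l - (l - k) = k by omega]
  rw [show n + l - (l - k) = n + k by omega]
  rw [show n + m + 2 * l - (l - k) = n + m + l + k by omega]
  have hsgn : (-1 : ℂ) ^ (l - k) = (-1) ^ l * (-1) ^ k := by
    have h2 : ((-1 : ℂ) ^ k) * ((-1 : ℂ) ^ k) = 1 := by
      rw [← pow_add]
      simp [pow_add, ← two_mul, pow_mul]
    calc (-1 : ℂ) ^ (l - k) = (-1 : ℂ) ^ (l - k) * (((-1 : ℂ) ^ k) * ((-1 : ℂ) ^ k)) := by
          rw [h2, mul_one]
      _ = ((-1 : ℂ) ^ (l - k) * (-1 : ℂ) ^ k) * (-1 : ℂ) ^ k := by ring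
      _ = (-1 : ℂ) ^ l * (-1 : ℂ) ^ k := by rw [← pow_add, Nat.sub_add_cancel hk']
  have hzp : (z : ℂ) ^ (l - k) = z ^ l / z ^ k := by
    rw [eq_div_iff (pow_ne_zero _ hz), ← pow_add, Nat.sub_add_cancel hk']
  have hnz : (-z) ^ l = (-1 : ℂ) ^ l * z ^ l := by rw [neg_pow]
  rw [hsgn, hzp, hnz, one_div, inv_pow]
  have f1 := fun N => Nat.cast_ne_zero (R := ℂ) |>.mpr (Nat.factorial_ne_zero N)
  have hc : ∀ j : ℕ, ((-1 : ℂ)) ^ (j * 3) = (-1) ^ j := by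
    intro j; rw [pow_mul']; norm_num
  field_simp
  ring_nf
  have key1 : (((n + l + m).factorial : ℕ) : ℂ) * (((n + l + m).factorial : ℕ) : ℂ)⁻¹ = 1 :=
    mul_inv_cancel₀ (f1 _)
  have key2 : ((n.factorial : ℕ) : ℂ) * ((n.factorial : ℕ) : ℂ)⁻¹ = 1 :=
    mul_inv_cancel₀ (f1 _)
  linear_combination
    (-((l.factorial : ℂ) * ((n + l).factorial : ℂ) * ((n + l + m + k).factorial : ℂ) *
        ((k.factorial : ℂ))⁻¹ * (((n + k).factorial : ℂ))⁻¹ *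
        (((n + l * 2 + m).factorial : ℂ))⁻¹ * (((l - k).factorial : ℂ))⁻¹ *
        (n.factorial : ℂ) * ((n.factorial : ℂ))⁻¹)) * key1 +
    (-((l.factorial : ℂ) * ((n + l).factorial : ℂ) * ((n + l + m + k).factorial : ℂ) *
        ((k.factorial : ℂ))⁻¹ * (((n + k).factorial : ℂ))⁻¹ *
        (((n + l * 2 + m).factorial : ℂ))⁻¹ * (((l - k).factorial : ℂ))⁻¹)) * key2
end
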